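/- arXiv:2204.11429 — 4 statements merged into one kernel-verified Lean document; each statement's English description precedes it below -/
import Mathlib

section
/- Let F be a translation + invariant Furstenberg family on ℕ such that the collection ess(F) of essential F-sets has the Ramsey property, and let α > 0. Then the following two statements are equivalent: (1) for every essential F-set A and every 0 < γ < 1, the set g_{α,γ}(A) is an essential F-set; (2) for every invertible dynamical system (X,T) and all points x, y ∈ X with x F-strongly proximal to y, there exists 0 < γ₀ < 1 such that the pair (x,y) has the F-suspension-proximality property at level γ₀ for the suspension (Y,F_{α⁻¹}). -/
open Set Filter Topology

attribute [local instance] Ultrafilter.add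

/-- The nonhomogeneous spectrum function `g_{α,γ}(n) = ⌊nα + γ⌋`. -/
noncomputable def gFun (α γ : ℝ) (n : ℕ) : ℕ := (⌊(n : ℝ) * α + γ⌋).toNat

/-- The image `g_{α,γ}(A) = {⌊nα + γ⌋ : n ∈ A}` of a set `A ⊆ ℕ` under the spectrum map. -/
noncomputable def gImage (α γ : ℝ) (A : Set ℕ) : Set ℕ := gFun α γ '' A

/-- A Furstenberg family: a nonempty collection of nonempty subsets of ℕ (the positive
integers), hereditary upwards. -/
def IsFurstenbergFamily (F : Set (Set ℕ)) : Prop :=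
  F.Nonempty ∧ (∀ A ∈ F, A.Nonempty) ∧ ∀ A B : Set ℕ, A ∈ F → A ⊆ B → B ∈ F

/-- Translation `+` invariance of a family. -/
def TranslationInvariant (F : Set (Set ℕ)) : Prop :=
  ∀ n : ℕ, ∀ A ∈ F, (fun m => n + m) '' A ∈ F

/-- The Ramsey property of a family. -/
def HasRamseyProperty (F : Set (Set ℕ)) : Prop :=
  ∀ A B : Set ℕ, A ∪ B ∈ F → A ∈ F ∨ B ∈ F

/-- `N((x,y), U×U) = {n ∈ ℕ : Tⁿx ∈ U and Tⁿy ∈ U}` (ℕ being the positive integers). -/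
def retTimes2 {X : Type*} (T : X → X) (x y : X) (U : Set X) : Set ℕ :=
  {n : ℕ | 0 < n ∧ T^[n] x ∈ U ∧ T^[n] y ∈ U}

/-- `N(x, U) = {n ∈ ℕ : Tⁿx ∈ U}` (ℕ being the positive integers). -/
def retTimes1 {X : Type*} (T : X → X) (x : X) (U : Set X) : Set ℕ :=
  {n : ℕ | 0 < n ∧ T^[n] x ∈ U}

/-- `x` is `F`-strongly proximal to `y`: for every neighborhood `U` of `y`,
`N((x,y),U×U) ∈ F`. -/
def StronglyProximal {X : Type*} [TopologicalSpace X] (F : Set (Set ℕ))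
    (T : X → X) (x y : X) : Prop :=
  ∀ U ∈ nhds y, retTimes2 T x y U ∈ F

/-- `A` is an essential `F`-set: witnessed by a dynamical system (compact metric space with a
continuous self-map), a pair of points `x` `F`-strongly proximal to `y`, and a neighborhood
`U` of `y` with `N((x,y),U×U) ⊆ A`. -/
def IsEssentialSet (F : Set (Set ℕ)) (A : Set ℕ) : Prop :=
  ∃ (X : Type) (_ : MetricSpace X) (_ : CompactSpace X) (T : X → X),
    Continuous T ∧ ∃ x y : X, StronglyProximal F T x y ∧
      ∃ U ∈ nhds y, retTimes2 T x y U ⊆ A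

/-- The return-time set of the pair `((x,γ),(y,γ))` to the neighborhood `U × (γ-ε, γ+ε)`
in the suspension `(Y, F_{α⁻¹})`, expressed on the base:
`{n : F_{α⁻¹}ⁿ(x,γ) ∈ U × (γ-ε,γ+ε) and F_{α⁻¹}ⁿ(y,γ) ∈ U × (γ-ε,γ+ε)}`, where
`F_{α⁻¹}ⁿ(x,t) = (T^{⌊n/α+t⌋}x, n/α+t-⌊n/α+t⌋)`. -/
noncomputable def suspRet {X : Type*} (T : X → X) (x y : X) (U : Set X)
    (α γ ε : ℝ) : Set ℕ :=
  {n : ℕ | 0 < n ∧ T^[(⌊(n : ℝ) / α + γ⌋).toNat] x ∈ U ∧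
    T^[(⌊(n : ℝ) / α + γ⌋).toNat] y ∈ U ∧
    γ - ε < (n : ℝ) / α + γ - ⌊(n : ℝ) / α + γ⌋ ∧
    (n : ℝ) / α + γ - ⌊(n : ℝ) / α + γ⌋ < γ + ε}

/-- The pair `(x,y)` has the `F`-suspension-proximality property at level `γ` for the
suspension `(Y, F_{α⁻¹})` of `(X,T)`: for every neighborhood `U` of `y` and every
`0 < ε < min{γ, 1-γ}`, the corresponding return-time set in the suspension belongs to `F`
(i.e. `(x,γ)` is `F`-strongly proximal to `(y,γ)` in `(Y, F_{α⁻¹})`). -/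
def SuspensionProximal {X : Type*} [TopologicalSpace X] (F : Set (Set ℕ))
    (T : X → X) (x y : X) (α γ : ℝ) : Prop :=
  ∀ U ∈ nhds y, ∀ ε : ℝ, 0 < ε → ε < min γ (1 - γ) → suspRet T x y U α γ ε ∈ F

/-- `A ⊆ ℕ` is an IP-set. -/
def IsIPSet (A : Set ℕ) : Prop :=
  ∃ p : ℕ → ℕ, (∀ n, 0 < p n) ∧ ∀ s : Finset ℕ, s.Nonempty → ∑ n ∈ s, p n ∈ A

/-- `A ⊆ ℕ` is an AP-set: it contains arbitrarily long arithmetic progressions. -/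
def IsAPSet (A : Set ℕ) : Prop :=
  ∀ m : ℕ, ∃ a b : ℕ, 0 < a ∧ 0 < b ∧ ∀ k < m, a + k * b ∈ A

/-- `A ⊆ ℕ` is a J-set. -/
def IsJSet (A : Set ℕ) : Prop :=
  ∀ (m : ℕ) (p : Fin m → ℕ → ℕ), (∀ i n, 0 < p i n) →
    ∃ r : ℕ, 0 < r ∧ ∃ s : Finset ℕ, s.Nonempty ∧ ∀ i : Fin m, r + ∑ n ∈ s, p i n ∈ A

/-- `A ⊆ ℕ` is piecewise syndetic: for some `ℓ`, the union `⋃_{i=0}^{ℓ} (A−i)` contains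
arbitrarily long intervals of consecutive integers. -/
def IsPiecewiseSyndetic (A : Set ℕ) : Prop :=
  ∃ l : ℕ, ∀ m : ℕ, ∃ n : ℕ, 0 < n ∧ ∀ k, n ≤ k → k ≤ n + m → ∃ i ≤ l, k + i ∈ A

/-- The upper density `d*(A) = limsup_{n→∞} |A ∩ [1,n]| / n`. -/
noncomputable def upperDensity (A : Set ℕ) : ℝ :=
  Filter.limsup (fun n : ℕ => ((A ∩ Set.Icc 1 n).ncard : ℝ) / n) Filter.atTop

/-- The upper Banach density
`BD*(A) = limsup_{(n−m)→∞} |A ∩ [m,n]| / (n−m+1) = limsup_{L→∞} sup_m |A ∩ [m,m+L]| / (L+1)`. -/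
noncomputable def upperBanachDensity (A : Set ℕ) : ℝ :=
  Filter.limsup (fun L : ℕ =>
    ⨆ m : ℕ, ((A ∩ Set.Icc m (m + L)).ncard : ℝ) / (L + 1)) Filter.atTop

/-- `A ⊆ ℕ` is a C-set: a member of an idempotent ultrafilter all of whose members are
J-sets. -/
def IsCSet (A : Set ℕ) : Prop :=
  ∃ p : Ultrafilter ℕ, p + p = p ∧ (∀ B ∈ p, IsJSet B) ∧ A ∈ p

/-- `A ⊆ ℕ` is a D-set: a member of an idempotent ultrafilter all of whose members have
positive upper Banach density. -/
def IsDSet (A : Set ℕ) : Prop :=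
  ∃ p : Ultrafilter ℕ, p + p = p ∧ (∀ B ∈ p, 0 < upperBanachDensity B) ∧ A ∈ p

/-- `A ⊆ ℕ` is a quasi-central set: a member of an idempotent ultrafilter all of whose
members are piecewise syndetic. -/
def IsQuasiCentralSet (A : Set ℕ) : Prop :=
  ∃ p : Ultrafilter ℕ, p + p = p ∧ (∀ B ∈ p, IsPiecewiseSyndetic B) ∧ A ∈ p

/-- The dual family `ess*(F)` of the family of essential `F`-sets. -/
def essDual (F : Set (Set ℕ)) : Set (Set ℕ) :=
  {B : Set ℕ | ∀ A : Set ℕ, IsEssentialSet F A → (B ∩ A).Nonempty}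
namespace SpectraAux

open Function Filter Set

attribute [local instance] Ultrafilter.add

variable {F : Set (Set ℕ)}

/-! ### Basic lemmas about essential sets -/

lemma essential_mono {A B : Set ℕ} (h : IsEssentialSet F A) (hAB : A ⊆ B) :
    IsEssentialSet F B := by
  obtain ⟨X, m, c, T, hT, x, y, hxy, U, hU, hsub⟩ := h
  exact ⟨X, m, c, T, hT, x, y, hxy, U, hU, hsub.trans hAB⟩

lemma essential_mem_F (hF : IsFurstenbergFamily F) {A : Set ℕ} (h : IsEssentialSet F A) :
    A ∈ F := by
  obtain ⟨X, m, c, T, hT, x, y, hxy, U, hU, hsub⟩ := h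
  exact hF.2.2 _ _ (hxy U hU) hsub

lemma retTimes2_inter {X : Type*} (T : X → X) (x y : X) (U V : Set X) :
    retTimes2 T x y (U ∩ V) = retTimes2 T x y U ∩ retTimes2 T x y V := by
  ext n
  simp only [retTimes2, Set.mem_setOf_eq, Set.mem_inter_iff]
  tauto

lemma retTimes2_mono {X : Type*} (T : X → X) (x y : X) {U V : Set X} (h : U ⊆ V) :
    retTimes2 T x y U ⊆ retTimes2 T x y V := fun _ hn => ⟨hn.1, h hn.2.1, h hn.2.2⟩

lemma retTimes2_pos {X : Type*} (T : X → X) (x y : X) (U : Set X) :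
    retTimes2 T x y U ⊆ {n : ℕ | 0 < n} := fun _ hn => hn.1

/-! ### Ultrafilter addition lemmas -/

lemma mem_add_iff (p q : Ultrafilter ℕ) (s : Set ℕ) :
    s ∈ p + q ↔ {m : ℕ | {n : ℕ | m + n ∈ s} ∈ q} ∈ p :=
  Ultrafilter.eventually_add p q (· ∈ s)

lemma tail_mem {p : Ultrafilter ℕ} (hp : p + p = p) (h0 : {n : ℕ | 0 < n} ∈ p) (k : ℕ) :
    {n : ℕ | k ≤ n} ∈ p := by
  induction k with
  | zero => exact Filter.mem_of_superset h0 fun n _ => Nat.zero_le n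
  | succ k ih =>
    have h : {n : ℕ | k + 1 ≤ n} ∈ p + p := by
      rw [mem_add_iff]
      refine Filter.mem_of_superset h0 fun m hm => ?_
      refine Filter.mem_of_superset ih fun n hn => ?_
      simp only [Set.mem_setOf_eq] at *
      omega
    rwa [hp] at h

lemma real_tail_mem {p : Ultrafilter ℕ} (hp : p + p = p) (h0 : {n : ℕ | 0 < n} ∈ p) (c : ℝ) :
    {n : ℕ | c ≤ (n : ℝ)} ∈ p :=
  Filter.mem_of_superset (tail_mem hp h0 ⌈c⌉₊) fun n hn => by
    simp only [Set.mem_setOf_eq] at *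
    exact_mod_cast Nat.ceil_le.mp hn

end SpectraAux
namespace SpectraAux

open Function Filter Set

attribute [local instance] Ultrafilter.add

variable {F : Set (Set ℕ)}

/-! ### Symbolic systems -/

/-- The shift map on `ι → Bool`. -/
def shiftE {ι : Type} [AddCommMonoid ι] (e : ℕ →+ ι) : (ι → Bool) → ι → Bool :=
  fun u i => u (i + e 1)

lemma shiftE_continuous {ι : Type} [AddCommMonoid ι] (e : ℕ →+ ι) :
    Continuous (shiftE e) :=
  continuous_pi fun _ => continuous_apply _

lemma shiftE_iterate {ι : Type} [AddCommMonoid ι] (e : ℕ →+ ι) (n : ℕ) :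
    ∀ (u : ι → Bool) (i : ι), (shiftE e)^[n] u i = u (i + e n) := by
  induction n with
  | zero => intro u i; simp
  | succ n ih =>
    intro u i
    rw [Function.iterate_succ_apply, ih]
    simp only [shiftE]
    congr 1
    rw [add_assoc, ← map_add]

/-- The `p`-limit point of the forward orbit of `xh` under the shift. -/
noncomputable def omegaPt {ι : Type} [AddCommMonoid ι] (e : ℕ →+ ι) (xh : ι → Bool)
    (p : Ultrafilter ℕ) : ι → Bool :=
  fun i => @decide ({n : ℕ | xh (i + e n) = true} ∈ p) (Classical.propDecidable _)

lemma omegaPt_eq_true {ι : Type} [AddCommMonoid ι] {e : ℕ →+ ι} {xh : ι → Bool}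
    {p : Ultrafilter ℕ} {i : ι} :
    omegaPt e xh p i = true ↔ {n : ℕ | xh (i + e n) = true} ∈ p := by
  simp [omegaPt]

lemma omegaPt_eq_false {ι : Type} [AddCommMonoid ι] {e : ℕ →+ ι} {xh : ι → Bool}
    {p : Ultrafilter ℕ} {i : ι} :
    omegaPt e xh p i = false ↔ {n : ℕ | xh (i + e n) = true} ∉ p := by
  simp [omegaPt]

lemma idem_shift {ι : Type} [AddCommMonoid ι] (e : ℕ →+ ι) (xh : ι → Bool)
    {p : Ultrafilter ℕ} (hp : p + p = p) (i : ι) :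
    ({n : ℕ | xh (i + e n) = true} ∈ p) ↔
      ({n : ℕ | {m : ℕ | xh (i + e n + e m) = true} ∈ p} ∈ p) := by
  conv_lhs => rw [← hp]
  rw [mem_add_iff]
  have hs : ∀ n : ℕ, {m : ℕ | n + m ∈ {k : ℕ | xh (i + e k) = true}}
      = {m : ℕ | xh (i + e n + e m) = true} := by
    intro n
    ext m
    simp only [Set.mem_setOf_eq, map_add, add_assoc]
  simp only [hs]

lemma mem_E {ι : Type} [AddCommMonoid ι] (e : ℕ →+ ι) (xh : ι → Bool)
    {p : Ultrafilter ℕ} (i : ι) :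
    {n : ℕ | xh (i + e n) = omegaPt e xh p i} ∈ p := by
  by_cases h : {n : ℕ | xh (i + e n) = true} ∈ p
  · have : omegaPt e xh p i = true := omegaPt_eq_true.mpr h
    rw [this]; exact h
  · have hω : omegaPt e xh p i = false := omegaPt_eq_false.mpr h
    rw [hω]
    have hc : {n : ℕ | xh (i + e n) = true}ᶜ ∈ p := (Ultrafilter.compl_mem_iff_notMem).mpr h
    refine Filter.mem_of_superset hc fun n hn => ?_
    simp only [Set.mem_compl_iff, Set.mem_setOf_eq] at *
    exact Bool.not_eq_true _ ▸ hn

lemma mem_E' {ι : Type} [AddCommMonoid ι] (e : ℕ →+ ι) (xh : ι → Bool)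
    {p : Ultrafilter ℕ} (hp : p + p = p) (i : ι) :
    {n : ℕ | omegaPt e xh p (i + e n) = omegaPt e xh p i} ∈ p := by
  by_cases h : {n : ℕ | xh (i + e n) = true} ∈ p
  · have hω : omegaPt e xh p i = true := omegaPt_eq_true.mpr h
    rw [hω]
    refine Filter.mem_of_superset ((idem_shift e xh hp i).mp h) fun n hn => ?_
    simp only [Set.mem_setOf_eq] at *
    exact omegaPt_eq_true.mpr hn
  · have hω : omegaPt e xh p i = false := omegaPt_eq_false.mpr h
    rw [hω]
    have h2 : {n : ℕ | {m : ℕ | xh (i + e n + e m) = true} ∈ p} ∉ p := by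
      intro hcon; exact h ((idem_shift e xh hp i).mpr hcon)
    have hc := (Ultrafilter.compl_mem_iff_notMem).mpr h2
    refine Filter.mem_of_superset hc fun n hn => ?_
    simp only [Set.mem_compl_iff, Set.mem_setOf_eq] at *
    exact omegaPt_eq_false.mpr hn

lemma symbolic_proximal {ι : Type} [AddCommMonoid ι] (e : ℕ →+ ι) (xh : ι → Bool)
    {p : Ultrafilter ℕ} (hp : p + p = p) (hpos : {n : ℕ | 0 < n} ∈ p)
    (hpF : ∀ B ∈ p, B ∈ F) :
    StronglyProximal F (shiftE e) xh (omegaPt e xh p) := by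
  intro W hW
  rw [nhds_pi, Filter.mem_pi] at hW
  obtain ⟨I, hIfin, t, ht, hsub⟩ := hW
  set ω := omegaPt e xh p with hωdef
  have hG : {n : ℕ | 0 < n} ∩ ⋂ i ∈ I,
      ({n : ℕ | xh (i + e n) = ω i} ∩ {n : ℕ | ω (i + e n) = ω i}) ∈ p := by
    refine Filter.inter_mem hpos ?_
    rw [(Filter.biInter_mem hIfin : _)]
    exact fun i _ => Filter.inter_mem (mem_E e xh i) (mem_E' e xh hp i)
  refine hpF _ (Filter.mem_of_superset hG ?_)
  rintro n ⟨hn0, hn⟩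
  simp only [Set.mem_iInter, Set.mem_inter_iff, Set.mem_setOf_eq] at hn
  refine ⟨hn0, hsub ?_, hsub ?_⟩ <;>
  · intro i hi
    rw [shiftE_iterate]
    first
      | exact (hn i hi).1 ▸ mem_of_mem_nhds (ht i)
      | exact (hn i hi).2 ▸ mem_of_mem_nhds (ht i)

lemma symbolic_W0_nhds {ι : Type} [AddCommMonoid ι] {e : ℕ →+ ι} {xh : ι → Bool}
    {p : Ultrafilter ℕ} (hS : {n : ℕ | xh (e n) = true} ∈ p) :
    {u : ι → Bool | u 0 = true} ∈ nhds (omegaPt e xh p) := by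
  have hopen : IsOpen {u : ι → Bool | u 0 = true} := by
    have : {u : ι → Bool | u 0 = true} = (fun u : ι → Bool => u 0) ⁻¹' {true} := rfl
    rw [this]
    exact (continuous_apply 0).isOpen_preimage _ (isOpen_discrete _)
  refine hopen.mem_nhds ?_
  show omegaPt e xh p 0 = true
  rw [omegaPt_eq_true]
  simpa only [zero_add] using hS

lemma symbolic_ret_subset {ι : Type} [AddCommMonoid ι] (e : ℕ →+ ι) (xh b : ι → Bool) :
    retTimes2 (shiftE e) xh b {u : ι → Bool | u 0 = true} ⊆ {n : ℕ | xh (e n) = true} := by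
  rintro n ⟨hn0, h1, _⟩
  have := shiftE_iterate e n xh 0
  simp only [Set.mem_setOf_eq] at h1 ⊢
  rw [this] at h1
  rwa [zero_add] at h1

/-- Every member of an idempotent ultrafilter all of whose members belong to `F`
is an essential `F`-set. -/
lemma essential_of_mem_idem {p : Ultrafilter ℕ} (hp : p + p = p)
    (hpos : {n : ℕ | 0 < n} ∈ p) (hpF : ∀ B ∈ p, B ∈ F) {S : Set ℕ} (hS : S ∈ p) :
    IsEssentialSet F S := by
  classical
  set e : ℕ →+ ℕ := AddMonoidHom.id ℕ
  set xh : ℕ → Bool := fun n => decide (n ∈ S) with hxh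
  have hSx : {n : ℕ | xh (e n) = true} = S := by
    ext n; simp [hxh, e]
  letI : MetricSpace (ℕ → Bool) := TopologicalSpace.metrizableSpaceMetric _
  refine ⟨ℕ → Bool, inferInstance, inferInstance, shiftE e, shiftE_continuous e,
    xh, omegaPt e xh p, symbolic_proximal e xh hp hpos hpF,
    {u : ℕ → Bool | u 0 = true}, symbolic_W0_nhds (by rw [hSx]; exact hS), ?_⟩
  rw [← hSx] at *
  exact symbolic_ret_subset e xh _

end SpectraAux
namespace SpectraAux

open Function Filter Set

attribute [local instance] Ultrafilter.add

variable {F : Set (Set ℕ)}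

/-! ### An ultrafilter inside a Ramsey family -/

lemma exists_ultra_subfamily (E : Set (Set ℕ))
    (hup : ∀ A B : Set ℕ, A ∈ E → A ⊆ B → B ∈ E)
    (hne : ∀ A ∈ E, A.Nonempty)
    (hRam : ∀ A B : Set ℕ, A ∪ B ∈ E → A ∈ E ∨ B ∈ E)
    (S : Set (Set ℕ)) (hS0 : S.Nonempty) (hSE : ∀ s ∈ S, s ∈ E)
    (hSdir : ∀ s ∈ S, ∀ t ∈ S, s ∩ t ∈ S) :
    ∃ p : Ultrafilter ℕ, (∀ s ∈ S, s ∈ p) ∧ ∀ B ∈ p, B ∈ E := by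
  classical
  set 𝒞 : Set (Set (Set ℕ)) := {G | (∀ s ∈ S, s ∈ G) ∧ (∀ B ∈ G, B ∈ E) ∧
    (∀ B ∈ G, ∀ B' ∈ G, B ∩ B' ∈ G) ∧ ∀ B ∈ G, ∀ C : Set ℕ, B ⊆ C → C ∈ G} with h𝒞
  have hG₀ : {C : Set ℕ | ∃ s ∈ S, s ⊆ C} ∈ 𝒞 := by
    refine ⟨fun s hs => ⟨s, hs, subset_rfl⟩, ?_, ?_, ?_⟩
    · rintro B ⟨s, hs, hsB⟩; exact hup s B (hSE s hs) hsB
    · rintro B ⟨s, hs, hsB⟩ B' ⟨s', hs', hsB'⟩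
      exact ⟨s ∩ s', hSdir s hs s' hs', inter_subset_inter hsB hsB'⟩
    · rintro B ⟨s, hs, hsB⟩ C hBC; exact ⟨s, hs, hsB.trans hBC⟩
  obtain ⟨G, hsubG, hGmax⟩ := zorn_subset_nonempty 𝒞 (fun c hc hchain hcne => by
    obtain ⟨G₁, hG₁⟩ := hcne
    refine ⟨⋃₀ c, ⟨fun s hs => ⟨G₁, hG₁, (hc hG₁).1 s hs⟩, ?_, ?_, ?_⟩,
      fun s hs => subset_sUnion_of_mem hs⟩
    · rintro B ⟨G₂, hG₂, hBG₂⟩; exact (hc hG₂).2.1 B hBG₂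
    · rintro B ⟨G₂, hG₂, hB⟩ B' ⟨G₃, hG₃, hB'⟩
      rcases hchain.total hG₂ hG₃ with h | h
      · exact ⟨G₃, hG₃, (hc hG₃).2.2.1 B (h hB) B' hB'⟩
      · exact ⟨G₂, hG₂, (hc hG₂).2.2.1 B hB B' (h hB')⟩
    · rintro B ⟨G₂, hG₂, hB⟩ C hBC; exact ⟨G₂, hG₂, (hc hG₂).2.2.2 B hB C hBC⟩) _ hG₀
  obtain ⟨hGS, hGE, hGint, hGup⟩ := hGmax.prop
  have huniv : Set.univ ∈ G := by
    obtain ⟨s, hs⟩ := hS0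
    exact hGup s (hGS s hs) _ (subset_univ s)
  have hempty : (∅ : Set ℕ) ∉ G := by
    intro h
    obtain ⟨a, ha⟩ := hne ∅ (hGE ∅ h)
    exact ha
  -- dichotomy
  have hdich : ∀ A : Set ℕ, A ∈ G ∨ Aᶜ ∈ G := by
    intro A
    by_cases hA : ∀ B ∈ G, A ∩ B ∈ E
    · left
      set H : Set (Set ℕ) := {C | ∃ B ∈ G, A ∩ B ⊆ C} with hH
      have hHmem : H ∈ 𝒞 := by
        refine ⟨fun s hs => ⟨s, hGS s hs, inter_subset_right⟩, ?_, ?_, ?_⟩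
        · rintro C ⟨B, hB, hBC⟩; exact hup _ _ (hA B hB) hBC
        · rintro C ⟨B, hB, hBC⟩ C' ⟨B', hB', hBC'⟩
          refine ⟨B ∩ B', hGint B hB B' hB', ?_⟩
          intro a ⟨ha1, ha2, ha3⟩
          exact ⟨hBC ⟨ha1, ha2⟩, hBC' ⟨ha1, ha3⟩⟩
        · rintro C ⟨B, hB, hBC⟩ C' hCC'; exact ⟨B, hB, hBC.trans hCC'⟩
      have hGH : G ⊆ H := fun B hB => ⟨B, hB, inter_subset_right⟩
      have : H ⊆ G := hGmax.2 hHmem hGH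
      exact this ⟨Set.univ, huniv, by simp⟩
    · right
      by_cases hA' : ∀ B ∈ G, Aᶜ ∩ B ∈ E
      · set H : Set (Set ℕ) := {C | ∃ B ∈ G, Aᶜ ∩ B ⊆ C} with hH
        have hHmem : H ∈ 𝒞 := by
          refine ⟨fun s hs => ⟨s, hGS s hs, inter_subset_right⟩, ?_, ?_, ?_⟩
          · rintro C ⟨B, hB, hBC⟩; exact hup _ _ (hA' B hB) hBC
          · rintro C ⟨B, hB, hBC⟩ C' ⟨B', hB', hBC'⟩
            refine ⟨B ∩ B', hGint B hB B' hB', ?_⟩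
            intro a ⟨ha1, ha2, ha3⟩
            exact ⟨hBC ⟨ha1, ha2⟩, hBC' ⟨ha1, ha3⟩⟩
          · rintro C ⟨B, hB, hBC⟩ C' hCC'; exact ⟨B, hB, hBC.trans hCC'⟩
        have hGH : G ⊆ H := fun B hB => ⟨B, hB, inter_subset_right⟩
        have : H ⊆ G := hGmax.2 hHmem hGH
        exact this ⟨Set.univ, huniv, by simp⟩
      · exfalso
        push_neg at hA hA'
        obtain ⟨B, hB, hBE⟩ := hA
        obtain ⟨B', hB', hB'E⟩ := hA'
        have hBB' : B ∩ B' ∈ G := hGint B hB B' hB'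
        have hsplit : (A ∩ (B ∩ B')) ∪ (Aᶜ ∩ (B ∩ B')) = B ∩ B' := by
          ext a
          by_cases ha : a ∈ A <;> simp [ha]
        rcases hRam _ _ (hsplit ▸ hGE _ hBB') with h | h
        · exact hBE (hup _ _ h (inter_subset_inter_right A inter_subset_left))
        · exact hB'E (hup _ _ h (inter_subset_inter_right Aᶜ inter_subset_right))
  -- build the ultrafilter
  set f : Filter ℕ :=
    { sets := G
      univ_sets := huniv
      sets_of_superset := fun hB hBC => hGup _ hB _ hBC
      inter_sets := fun hB hC => hGint _ hB _ hC } with hf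
  have hmemf : ∀ s : Set ℕ, s ∈ f ↔ s ∈ G := fun s => Iff.rfl
  refine ⟨Ultrafilter.ofComplNotMemIff f (fun s => ?_), fun s hs => hGS s hs, fun B hB => hGE B hB⟩
  constructor
  · intro h
    rcases hdich s with h' | h'
    · exact h'
    · exact absurd h' h
  · intro hs hcs
    have : s ∩ sᶜ ∈ G := hGint _ hs _ hcs
    rw [Set.inter_compl_self] at this
    exact hempty this

end SpectraAux
namespace SpectraAux

open Function Filter Set

attribute [local instance] Ultrafilter.add Ultrafilter.addSemigroup

variable {F : Set (Set ℕ)}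

/-- The key lemma: given an `F`-strongly proximal pair in a compact metric system, there is
an idempotent ultrafilter containing all the return-time sets, all of whose members are
in `F`. -/
lemma exists_idem (hF : IsFurstenbergFamily F) (hTI : TranslationInvariant F)
    (hRam : HasRamseyProperty {A : Set ℕ | IsEssentialSet F A})
    {X : Type} [MetricSpace X] [CompactSpace X] {T : X → X} (hT : Continuous T)
    {x y : X} (hxy : StronglyProximal F T x y) :
    ∃ p : Ultrafilter ℕ, p + p = p ∧ (∀ V ∈ nhds y, retTimes2 T x y V ∈ p) ∧
      ∀ B ∈ p, B ∈ F := by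
  classical
  set C : Set (Ultrafilter ℕ) :=
    {p | (∀ V ∈ nhds y, retTimes2 T x y V ∈ p) ∧ ∀ B ∈ p, B ∈ F} with hC
  -- C is nonempty
  have hCne : C.Nonempty := by
    obtain ⟨p, hp1, hp2⟩ := exists_ultra_subfamily {A : Set ℕ | IsEssentialSet F A}
      (fun A B hA hAB => essential_mono hA hAB)
      (fun A hA => by
        obtain ⟨a, ha⟩ := hF.2.1 _ (essential_mem_F hF hA)
        exact ⟨a, ha⟩)
      hRam
      {s | ∃ V ∈ nhds y, s = retTimes2 T x y V}
      ⟨retTimes2 T x y Set.univ, Set.univ, Filter.univ_mem, rfl⟩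
      (by
        rintro s ⟨V, hV, rfl⟩
        exact ⟨X, inferInstance, inferInstance, T, hT, x, y, hxy, V, hV, subset_rfl⟩)
      (by
        rintro s ⟨V, hV, rfl⟩ t ⟨V', hV', rfl⟩
        exact ⟨V ∩ V', Filter.inter_mem hV hV', (retTimes2_inter T x y V V').symm⟩)
    refine ⟨p, fun V hV => hp1 _ ⟨V, hV, rfl⟩, fun B hB => essential_mem_F hF (hp2 B hB)⟩
  -- C is closed
  have hCclosed : IsClosed C := by
    have : C = (⋂ V ∈ nhds y, {p : Ultrafilter ℕ | retTimes2 T x y V ∈ p}) ∩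
        ⋂ B ∈ {B : Set ℕ | B ∉ F}, {p : Ultrafilter ℕ | Bᶜ ∈ p} := by
      ext p
      simp only [hC, Set.mem_inter_iff, Set.mem_iInter, Set.mem_setOf_eq]
      constructor
      · rintro ⟨h1, h2⟩
        refine ⟨h1, fun B hB => ?_⟩
        rw [Ultrafilter.compl_mem_iff_notMem]
        intro hBp
        exact hB (h2 B hBp)
      · rintro ⟨h1, h2⟩
        refine ⟨h1, fun B hBp => ?_⟩
        by_contra hB
        exact (Ultrafilter.compl_mem_iff_notMem.mp (h2 B hB)) hBp
    rw [this]
    exact IsClosed.inter (isClosed_biInter fun V _ => ultrafilter_isClosed_basic _)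
      (isClosed_biInter fun B _ => ultrafilter_isClosed_basic _)
  -- C is closed under addition
  have hCadd : ∀ p ∈ C, ∀ q ∈ C, p + q ∈ C := by
    rintro p ⟨hp1, hp2⟩ q ⟨hq1, hq2⟩
    constructor
    · intro V hV
      have hO : interior V ∈ nhds y := (interior_mem_nhds).mpr hV
      have key : retTimes2 T x y (interior V) ∈ p + q := by
        rw [mem_add_iff]
        refine Filter.mem_of_superset (hp1 _ hO) ?_
        rintro m ⟨hm0, hmx, hmy⟩
        have hV'' : interior V ∩ T^[m] ⁻¹' (interior V) ∈ nhds y := by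
          refine Filter.inter_mem hO ?_
          exact (hT.iterate m).continuousAt.preimage_mem_nhds
            (isOpen_interior.mem_nhds hmy)
        refine Filter.mem_of_superset (hq1 _ hV'') ?_
        rintro n ⟨hn0, hnx, hny⟩
        refine ⟨by omega, ?_, ?_⟩
        · rw [Function.iterate_add_apply]; exact hnx.2
        · rw [Function.iterate_add_apply]; exact hny.2
      exact Filter.mem_of_superset key (retTimes2_mono T x y interior_subset)
    · intro B hB
      rw [mem_add_iff] at hB
      obtain ⟨m, hm⟩ := Ultrafilter.nonempty_of_mem hB
      have h1 : {n : ℕ | m + n ∈ B} ∈ F := hq2 _ hm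
      have h2 : (fun k => m + k) '' {n : ℕ | m + n ∈ B} ∈ F := hTI m _ h1
      refine hF.2.2 _ _ h2 ?_
      rintro _ ⟨n, hn, rfl⟩
      exact hn
  obtain ⟨p, hpC, hpp⟩ := exists_idempotent_in_compact_add_subsemigroup
    (Ultrafilter.continuous_add_left) C hCne (hCclosed.isCompact) hCadd
  exact ⟨p, hpp, hpC.1, hpC.2⟩

end SpectraAux
namespace SpectraAux

open Function Filter Set

attribute [local instance] Ultrafilter.add

/-! ### Near-integer multiples along an idempotent -/

lemma D_mem (p : Ultrafilter ℕ) (hp : p + p = p) (β : ℝ) {δ : ℝ} (hδ : 0 < δ) :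
    {n : ℕ | ∃ k : ℤ, |(n : ℝ) * β - k| < δ} ∈ p := by
  classical
  set f : ℕ → ℝ := fun n => Int.fract ((n : ℝ) * β) with hf
  have hmem : ∀ n, f n ∈ Set.Icc (0 : ℝ) 1 := fun n =>
    ⟨Int.fract_nonneg _, (Int.fract_lt_one _).le⟩
  obtain ⟨c, hc, hlim⟩ := isCompact_Icc.ultrafilter_le_nhds (p.map f)
    (le_principal_iff.mpr (by
      rw [Ultrafilter.mem_coe, Ultrafilter.mem_map]
      exact Filter.univ_mem' fun n => hmem n))
  have hJ : ∀ η : ℝ, 0 < η → {n : ℕ | |f n - c| < η} ∈ p := by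
    intro η hη
    have h1 : Metric.ball c η ∈ nhds c := Metric.ball_mem_nhds _ hη
    have h2 : Metric.ball c η ∈ p.map f := hlim h1
    rw [Ultrafilter.mem_map] at h2
    refine Filter.mem_of_superset h2 fun n hn => ?_
    simpa [Real.dist_eq] using hn
  have hfract : ∀ m n : ℕ, f (m + n) = Int.fract (f m + f n) := by
    intro m n
    have h1 : ((m + n : ℕ) : ℝ) * β = (m : ℝ) * β + (n : ℝ) * β := by push_cast; ring
    rw [hf]
    simp only
    rw [h1]
    refine Int.fract_eq_fract.mpr ⟨⌊(m : ℝ) * β⌋ + ⌊(n : ℝ) * β⌋, ?_⟩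
    have hm := Int.floor_add_fract ((m : ℝ) * β)
    have hn := Int.floor_add_fract ((n : ℝ) * β)
    rw [Int.fract] ; rw [Int.fract]
    push_cast
    ring
  have hc01 : c = 0 ∨ c = 1 := by
    rcases hc with ⟨hc0, hc1⟩
    by_contra hcon
    push_neg at hcon
    have h0 : 0 < c := lt_of_le_of_ne hc0 (Ne.symm hcon.1)
    have h1 : c < 1 := lt_of_le_of_ne hc1 hcon.2
    set η : ℝ := min c (1 - c) / 3 with hηdef
    have hη0 : 0 < η := by
      apply div_pos (lt_min h0 (by linarith)) (by norm_num)
    have h3a : 3 * η ≤ c := by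
      have := min_le_left c (1 - c); rw [hηdef]; linarith
    have h3b : 3 * η ≤ 1 - c := by
      have := min_le_right c (1 - c); rw [hηdef]; linarith
    have hJη := hJ η hη0
    have hJ2 : {m : ℕ | {n : ℕ | m + n ∈ {k : ℕ | |f k - c| < η}} ∈ p} ∈ p := by
      rw [← mem_add_iff, hp]; exact hJη
    obtain ⟨m, hm1, hm2⟩ := Ultrafilter.nonempty_of_mem (Filter.inter_mem hJη hJ2)
    obtain ⟨n, hn1, hn2⟩ := Ultrafilter.nonempty_of_mem (Filter.inter_mem hJη hm2)
    simp only [Set.mem_setOf_eq] at hm1 hn1 hn2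
    have hfm0 : 0 ≤ f m := (hmem m).1
    have hfn0 : 0 ≤ f n := (hmem n).1
    have hfm1 : f m < 1 := Int.fract_lt_one _
    have hfn1 : f n < 1 := Int.fract_lt_one _
    rw [abs_lt] at hm1 hn1 hn2
    rcases lt_or_ge (f m + f n) 1 with hlt | hge
    · have heq : f (m + n) = f m + f n := by
        rw [hfract, Int.fract_eq_self.mpr ⟨by linarith, hlt⟩]
      rw [heq] at hn2
      linarith
    · have heq : f (m + n) = f m + f n - 1 := by
        rw [hfract]
        have h2 : Int.fract (f m + f n - (1 : ℤ)) = Int.fract (f m + f n) :=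
          Int.fract_sub_intCast _ _
        rw [← h2]
        push_cast
        exact Int.fract_eq_self.mpr ⟨by linarith, by linarith⟩
      rw [heq] at hn2
      linarith
  have hsub : {n : ℕ | |f n - c| < δ} ⊆ {n : ℕ | ∃ k : ℤ, |(n : ℝ) * β - k| < δ} := by
    intro n hn
    simp only [Set.mem_setOf_eq] at hn ⊢
    rcases hc01 with rfl | rfl
    · refine ⟨⌊(n : ℝ) * β⌋, ?_⟩
      have : (n : ℝ) * β - ⌊(n : ℝ) * β⌋ = f n := by rw [hf]; simp only []; rw [Int.fract]
      rw [this]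
      simpa using hn
    · refine ⟨⌊(n : ℝ) * β⌋ + 1, ?_⟩
      have : (n : ℝ) * β - (⌊(n : ℝ) * β⌋ + 1 : ℤ) = f n - 1 := by
        rw [hf]; simp only [Int.fract]; push_cast; ring
      rw [this]
      exact hn
  exact Filter.mem_of_superset (hJ δ hδ) hsub

/-! ### Floor arithmetic -/

lemma floor_add_eq {β γ δ : ℝ} {N : ℕ} {k : ℤ} (hNβ : 0 ≤ (N : ℝ) * β)
    (hδ0 : 0 < δ) (hδγ : δ ≤ γ) (hδγ' : δ + γ ≤ 1)
    (hnear : |(N : ℝ) * β - k| < δ) :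
    ⌊(N : ℝ) * β + γ⌋ = k ∧ 0 ≤ k := by
  rw [abs_lt] at hnear
  have hγ0 : 0 < γ := lt_of_lt_of_le hδ0 hδγ
  have hk0 : 0 ≤ k := by
    by_contra h
    push_neg at h
    have : (k : ℝ) ≤ -1 := by exact_mod_cast Int.le_sub_one_of_lt h
    linarith
  refine ⟨?_, hk0⟩
  rw [Int.floor_eq_iff]
  constructor
  · linarith
  · push_cast; linarith

lemma gFun_eq_toNat {β γ δ : ℝ} {N : ℕ} {k : ℤ} (hNβ : 0 ≤ (N : ℝ) * β)
    (hδ0 : 0 < δ) (hδγ : δ ≤ γ) (hδγ' : δ + γ ≤ 1)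
    (hnear : |(N : ℝ) * β - k| < δ) :
    gFun β γ N = k.toNat ∧ ((gFun β γ N : ℤ) = k) := by
  obtain ⟨h1, h2⟩ := floor_add_eq hNβ hδ0 hδγ hδγ' hnear
  constructor
  · rw [gFun, h1]
  · rw [gFun, h1, Int.toNat_of_nonneg h2]

/-- Sufficient condition for membership in `suspRet`. -/
lemma mem_suspRet {X : Type*} {T : X → X} {x y : X} {U : Set X} {α γ ε : ℝ}
    (hα : 0 < α) (hεγ : ε < γ) (hεγ' : ε < 1 - γ)
    {N m : ℕ} (hm0 : 0 < m) (hnear : |(m : ℝ) - (N : ℝ) * α| < α * ε)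
    (hx : T^[N] x ∈ U) (hy : T^[N] y ∈ U) : m ∈ suspRet T x y U α γ ε := by
  have h1 : |(m : ℝ) / α - (N : ℝ)| < ε := by
    have heq : (m : ℝ) / α - (N : ℝ) = ((m : ℝ) - (N : ℝ) * α) / α := by
      rw [sub_div, mul_div_cancel_right₀ _ hα.ne']
    rw [heq, abs_div, abs_of_pos hα, div_lt_iff₀ hα]
    exact lt_of_lt_of_eq hnear (mul_comm α ε)
  rw [abs_lt] at h1
  have hfl : ⌊(m : ℝ) / α + γ⌋ = (N : ℤ) := by
    rw [Int.floor_eq_iff]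
    push_cast
    constructor <;> linarith
  have htn : (⌊(m : ℝ) / α + γ⌋).toNat = N := by rw [hfl]; simp
  refine ⟨hm0, by rw [htn]; exact hx, by rw [htn]; exact hy, ?_, ?_⟩ <;>
    rw [hfl] <;> push_cast <;> linarith

/-- Extracting an approximate multiple from a member of `suspRet`. -/
lemma suspRet_extract {X : Type*} {T : X → X} {x y : X} {U : Set X} {α γ ε : ℝ}
    (hα : 0 < α) (hγ0 : 0 < γ) {n : ℕ} (hn : n ∈ suspRet T x y U α γ ε) :
    ∃ N : ℕ, ((N : ℤ) = ⌊(n : ℝ) / α + γ⌋) ∧ T^[N] x ∈ U ∧ T^[N] y ∈ U ∧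
      |(n : ℝ) - (N : ℝ) * α| < α * ε := by
  obtain ⟨hn0, hx, hy, hf1, hf2⟩ := hn
  have hN0 : 0 ≤ ⌊(n : ℝ) / α + γ⌋ := Int.floor_nonneg.mpr (by positivity)
  refine ⟨(⌊(n : ℝ) / α + γ⌋).toNat, Int.toNat_of_nonneg hN0, hx, hy, ?_⟩
  have hcast : ((⌊(n : ℝ) / α + γ⌋.toNat : ℕ) : ℝ) = ((⌊(n : ℝ) / α + γ⌋ : ℤ) : ℝ) := by
    exact_mod_cast Int.toNat_of_nonneg hN0
  rw [hcast]
  have h2 : |(n : ℝ) / α - (⌊(n : ℝ) / α + γ⌋ : ℤ)| < ε := by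
    rw [abs_lt]
    constructor <;> linarith
  have heq : (n : ℝ) - (⌊(n : ℝ) / α + γ⌋ : ℤ) * α
      = ((n : ℝ) / α - (⌊(n : ℝ) / α + γ⌋ : ℤ)) * α := by
    rw [sub_mul, div_mul_cancel₀ _ hα.ne']
  rw [heq, abs_mul, abs_of_pos hα]
  exact lt_of_lt_of_eq (mul_lt_mul_of_pos_right h2 hα) (mul_comm ε α)

end SpectraAux
namespace SpectraAux

open Function Filter Set

attribute [local instance] Ultrafilter.add

variable {F : Set (Set ℕ)}

/-! ### The image ultrafilter is idempotent -/

lemma map_idem {α γ : ℝ} (hα : 0 ≤ α) (hγ0 : 0 < γ) (hγ1 : γ < 1)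
    {p : Ultrafilter ℕ} (hp : p + p = p)
    (hD : {n : ℕ | ∃ k : ℤ, |(n : ℝ) * α - k| < min γ (1 - γ) / 3} ∈ p) :
    p.map (gFun α γ) + p.map (gFun α γ) = p.map (gFun α γ) := by
  classical
  set δ : ℝ := min γ (1 - γ) / 3 with hδdef
  have hmin1 : min γ (1 - γ) ≤ γ := min_le_left _ _
  have hmin2 : min γ (1 - γ) ≤ 1 - γ := min_le_right _ _
  have hmin0 : 0 < min γ (1 - γ) := lt_min hγ0 (by linarith)
  have hδ0 : 0 < δ := by rw [hδdef]; positivity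
  have hδγ : δ ≤ γ := by rw [hδdef]; linarith
  have hδγ' : δ + γ ≤ 1 := by rw [hδdef]; linarith
  have h2δγ : 2 * δ ≤ γ := by rw [hδdef]; linarith
  have h2δγ' : 2 * δ + γ ≤ 1 := by rw [hδdef]; linarith
  set D : Set ℕ := {n : ℕ | ∃ k : ℤ, |(n : ℝ) * α - k| < δ} with hDdef
  set g : ℕ → ℕ := gFun α γ with hg
  have hadd : ∀ m ∈ D, ∀ n ∈ D, g (m + n) = g m + g n := by
    rintro m ⟨k, hk⟩ n ⟨l, hl⟩
    simp only [hg]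
    have hm := gFun_eq_toNat (mul_nonneg (Nat.cast_nonneg m) hα) hδ0 hδγ hδγ' hk
    have hn := gFun_eq_toNat (mul_nonneg (Nat.cast_nonneg n) hα) hδ0 hδγ hδγ' hl
    have hmn : |((m + n : ℕ) : ℝ) * α - ((k + l : ℤ) : ℝ)| < 2 * δ := by
      have heq : ((m + n : ℕ) : ℝ) * α - ((k + l : ℤ) : ℝ)
          = ((m : ℝ) * α - k) + ((n : ℝ) * α - l) := by push_cast; ring
      rw [heq]
      exact lt_of_le_of_lt (abs_add_le _ _) (by linarith)
    have hsum := gFun_eq_toNat (mul_nonneg (Nat.cast_nonneg (m + n)) hα)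
      (by linarith : (0 : ℝ) < 2 * δ) h2δγ h2δγ' hmn
    have hk0 : 0 ≤ k := hm.2 ▸ Int.natCast_nonneg _
    have hl0 : 0 ≤ l := hn.2 ▸ Int.natCast_nonneg _
    rw [hsum.1, hm.1, hn.1, Int.toNat_add hk0 hl0]
  have key : ∀ s : Set ℕ, s ∈ p.map g + p.map g ↔ s ∈ p.map g := by
    intro s
    rw [mem_add_iff]
    have l1 : ({m : ℕ | {n : ℕ | m + n ∈ s} ∈ p.map g} ∈ p.map g)
        ↔ ({m : ℕ | {n : ℕ | g m + g n ∈ s} ∈ p} ∈ p) := by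
      rw [Ultrafilter.mem_map]
      have hpre : g ⁻¹' {m : ℕ | {n : ℕ | m + n ∈ s} ∈ p.map g}
          = {m : ℕ | {n : ℕ | g m + g n ∈ s} ∈ p} := by
        ext m
        simp only [Set.mem_preimage, Set.mem_setOf_eq, Ultrafilter.mem_map]
        exact Iff.rfl
      rw [hpre]
    have r1 : (s ∈ p.map g) ↔ ({m : ℕ | {n : ℕ | g (m + n) ∈ s} ∈ p} ∈ p) := by
      rw [Ultrafilter.mem_map]
      conv_lhs => rw [← hp]
      rw [mem_add_iff]
      exact Iff.rfl
    rw [l1, r1]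
    constructor
    · intro h
      refine Filter.mem_of_superset (Filter.inter_mem h hD) ?_
      rintro m ⟨h1, h2⟩
      simp only [Set.mem_setOf_eq] at h1 ⊢
      refine Filter.mem_of_superset (Filter.inter_mem h1 hD) ?_
      rintro n ⟨h3, h4⟩
      simp only [Set.mem_setOf_eq] at h3 ⊢
      rwa [hadd m h2 n h4]
    · intro h
      refine Filter.mem_of_superset (Filter.inter_mem h hD) ?_
      rintro m ⟨h1, h2⟩
      simp only [Set.mem_setOf_eq] at h1 ⊢
      refine Filter.mem_of_superset (Filter.inter_mem h1 hD) ?_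
      rintro n ⟨h3, h4⟩
      simp only [Set.mem_setOf_eq] at h3 ⊢
      rwa [← hadd m h2 n h4]
  exact Ultrafilter.coe_inj.mp (Filter.ext fun s => by
    rw [Ultrafilter.mem_coe, Ultrafilter.mem_coe]
    exact key s)

/-! ### A two-sided (invertible) symbolic witness -/

lemma two_sided_witness {p : Ultrafilter ℕ} (hp : p + p = p)
    (hpos : {n : ℕ | 0 < n} ∈ p) (hpF : ∀ B ∈ p, B ∈ F) {P : Set ℕ} (hP : P ∈ p) :
    ∃ (Z : Type) (_ : MetricSpace Z) (_ : CompactSpace Z) (σ : Z → Z),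
      IsHomeomorph σ ∧ ∃ (a b : Z), StronglyProximal F σ a b ∧ ∃ W ∈ nhds b,
        ∀ N : ℕ, σ^[N] a ∈ W → N ∈ P := by
  classical
  set e : ℕ →+ ℤ := Nat.castAddMonoidHom ℤ with he
  set xh : ℤ → Bool := fun i => decide (∃ n : ℕ, (n : ℤ) = i ∧ n ∈ P) with hxh
  have hSx : {n : ℕ | xh (e n) = true} = P := by
    ext n
    simp only [hxh, he, Set.mem_setOf_eq, decide_eq_true_eq, Nat.coe_castAddMonoidHom]
    constructor
    · rintro ⟨m, hm, hmP⟩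
      rwa [(Nat.cast_inj.mp hm : m = n)] at hmP
    · intro hn
      exact ⟨n, rfl, hn⟩
  letI : MetricSpace (ℤ → Bool) := TopologicalSpace.metrizableSpaceMetric _
  set σinv : (ℤ → Bool) → ℤ → Bool := fun u i => u (i - 1) with hσinv
  have hhom : IsHomeomorph (shiftE e) := by
    rw [isHomeomorph_iff_exists_inverse]
    refine ⟨shiftE_continuous e, σinv, ?_, ?_, continuous_pi fun _ => continuous_apply _⟩
    · intro u
      funext i
      simp [shiftE, hσinv, he]
    · intro u
      funext i
      simp [shiftE, hσinv, he]
  refine ⟨ℤ → Bool, inferInstance, inferInstance, shiftE e, hhom, xh, omegaPt e xh p,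
    symbolic_proximal e xh hp hpos hpF, {u : ℤ → Bool | u 0 = true},
    symbolic_W0_nhds (by rw [hSx]; exact hP), ?_⟩
  intro N hN
  have hit := shiftE_iterate e N xh 0
  have : xh (0 + e N) = true := by rw [← hit]; exact hN
  rw [zero_add] at this
  rw [← hSx]
  exact this

end SpectraAux
/-- Theorem 1.1: For a translation `+` invariant Furstenberg family `F` such that `ess(F)`
has the Ramsey property, and `α > 0`, preservation of essential `F`-sets by all spectra
`g_{α,γ}` is equivalent to the lift property of strong `F`-proximality to the suspension
`(Y, F_{α⁻¹})`. -/
theorem spectra_preservation_iff_suspension_lift (F : Set (Set ℕ))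
    (hF : IsFurstenbergFamily F) (hTI : TranslationInvariant F)
    (hR : HasRamseyProperty {A : Set ℕ | IsEssentialSet F A}) (α : ℝ) (hα : 0 < α) :
    (∀ A : Set ℕ, IsEssentialSet F A → ∀ γ : ℝ, 0 < γ → γ < 1 →
        IsEssentialSet F (gImage α γ A)) ↔
      (∀ (X : Type) (_ : MetricSpace X) (_ : CompactSpace X) (T : X → X),
        IsHomeomorph T → ∀ x y : X, StronglyProximal F T x y →
          ∃ γ₀ : ℝ, 0 < γ₀ ∧ γ₀ < 1 ∧ SuspensionProximal F T x y α γ₀) := by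
  constructor
  · -- spectra preservation implies the suspension lift property
    intro h1 X mX cX T hT x y hxy
    letI := mX
    haveI := cX
    obtain ⟨p, hpp, hpret, hpF⟩ := SpectraAux.exists_idem hF hTI hR hT.continuous hxy
    have hpos : {n : ℕ | 0 < n} ∈ p :=
      Filter.mem_of_superset (hpret Set.univ Filter.univ_mem)
        (SpectraAux.retTimes2_pos T x y _)
    refine ⟨1/2, by norm_num, by norm_num, ?_⟩
    intro U hU ε hε0 hεlt
    have hε12 : ε < 1/2 := by
      rw [show (1 : ℝ) - 1/2 = 1/2 by norm_num, min_self] at hεlt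
      exact hεlt
    set δ : ℝ := min (min (α * ε) α) 1 / 2 with hδdef
    have hαε : 0 < α * ε := mul_pos hα hε0
    have hδ0 : 0 < δ := by
      rw [hδdef]
      apply div_pos (lt_min (lt_min hαε hα) one_pos) two_pos
    have hδαε : δ < α * ε := by
      have h1' : min (min (α * ε) α) 1 ≤ α * ε := le_trans (min_le_left _ _) (min_le_left _ _)
      rw [hδdef]; linarith
    have hδα : δ ≤ α / 2 := by
      have h1' : min (min (α * ε) α) 1 ≤ α := le_trans (min_le_left _ _) (min_le_right _ _)
      rw [hδdef]; linarith
    have hδhalf : δ ≤ 1/2 := by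
      have h1' : min (min (α * ε) α) 1 ≤ 1 := min_le_right _ _
      rw [hδdef]; linarith
    have hD := SpectraAux.D_mem p hpp α hδ0
    set B : Set ℕ := retTimes2 T x y U ∩ {n : ℕ | ∃ k : ℤ, |(n : ℝ) * α - k| < δ} with hB
    have hBp : B ∈ p := Filter.inter_mem (hpret U hU) hD
    have hBess : IsEssentialSet F B := SpectraAux.essential_of_mem_idem hpp hpos hpF hBp
    have him := h1 B hBess (1/2) (by norm_num) (by norm_num)
    refine hF.2.2 _ _ (SpectraAux.essential_mem_F hF him) ?_
    rintro _ ⟨N, ⟨⟨hN0, hNx, hNy⟩, k, hk⟩, rfl⟩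
    have hg := SpectraAux.gFun_eq_toNat (mul_nonneg (Nat.cast_nonneg N) hα.le) hδ0
      (by linarith : δ ≤ 1/2) (by linarith : δ + 1/2 ≤ 1) hk
    have hN1 : (1 : ℝ) ≤ (N : ℝ) := by exact_mod_cast hN0
    have hk1 : 1 ≤ k := by
      by_contra hcon
      push_neg at hcon
      have hk0 : (k : ℝ) ≤ 0 := by
        have : k ≤ 0 := by omega
        exact_mod_cast this
      rw [abs_lt] at hk
      have hNα : α ≤ (N : ℝ) * α := by nlinarith
      linarith [hk.2]
    have hgpos : 0 < gFun α (1/2) N := by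
      have h2' := hg.2
      omega
    have hnear : |((gFun α (1/2) N : ℕ) : ℝ) - (N : ℝ) * α| < α * ε := by
      have hcast : ((gFun α (1/2) N : ℕ) : ℝ) = (k : ℝ) := by exact_mod_cast hg.2
      rw [hcast]
      calc |(k : ℝ) - (N : ℝ) * α| = |(N : ℝ) * α - k| := abs_sub_comm _ _
        _ < δ := hk
        _ < α * ε := hδαε
    exact SpectraAux.mem_suspRet hα (by linarith) (by linarith) hgpos hnear hNx hNy
  · -- suspension lift property implies spectra preservation
    intro h2 A hA γ hγ0 hγ1
    obtain ⟨X, mX, cX, T, hT, x, y, hxy, U, hU, hsub⟩ := hA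
    letI := mX
    haveI := cX
    obtain ⟨p, hpp, hpret, hpF⟩ := SpectraAux.exists_idem hF hTI hR hT hxy
    have hpos : {n : ℕ | 0 < n} ∈ p :=
      Filter.mem_of_superset (hpret Set.univ Filter.univ_mem)
        (SpectraAux.retTimes2_pos T x y _)
    set δ : ℝ := min γ (1 - γ) / 3 with hδdef
    have hmin1 : min γ (1 - γ) ≤ γ := min_le_left _ _
    have hmin2 : min γ (1 - γ) ≤ 1 - γ := min_le_right _ _
    have hmin0 : 0 < min γ (1 - γ) := lt_min hγ0 (by linarith)
    have hδ0 : 0 < δ := by rw [hδdef]; positivity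
    have hδγ : δ ≤ γ := by rw [hδdef]; linarith
    have hδγ' : δ + γ ≤ 1 := by rw [hδdef]; linarith
    have hδ16 : δ ≤ 1/6 := by
      have hm : min γ (1 - γ) ≤ 1/2 := by
        rcases le_total γ (1 - γ) with h | h
        · exact le_trans (min_le_left _ _) (by linarith)
        · exact le_trans (min_le_right _ _) (by linarith)
      rw [hδdef]; linarith
    have hD := SpectraAux.D_mem p hpp α hδ0
    set g : ℕ → ℕ := gFun α γ with hg
    set q : Ultrafilter ℕ := p.map g with hq
    have hqq : q + q = q := SpectraAux.map_idem hα.le hγ0 hγ1 hpp hD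
    have hq0 : {n : ℕ | 0 < n} ∈ q := by
      rw [hq, Ultrafilter.mem_map]
      refine Filter.mem_of_superset (SpectraAux.real_tail_mem hpp hpos (1/α)) ?_
      intro n hn
      simp only [Set.mem_setOf_eq, Set.mem_preimage] at hn ⊢
      have h1n : (1 : ℝ) ≤ (n : ℝ) * α := by
        rw [div_le_iff₀ hα] at hn
        linarith
      have hfl : (1 : ℤ) ≤ ⌊(n : ℝ) * α + γ⌋ := by
        apply Int.le_floor.mpr
        push_cast
        linarith
      simp only [hg, gFun]
      omega
    have hqF : ∀ S ∈ q, S ∈ F := by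
      intro S hS
      rw [hq, Ultrafilter.mem_map] at hS
      set P : Set ℕ := g ⁻¹' S ∩ {n : ℕ | ∃ k : ℤ, |(n : ℝ) * α - k| < δ} with hP
      have hPp : P ∈ p := Filter.inter_mem hS hD
      obtain ⟨Z, mZ, cZ, σ, hσ, a, b, hprox, W, hW, hext⟩ :=
        SpectraAux.two_sided_witness hpp hpos hpF hPp
      obtain ⟨γ₀, hγ₀0, hγ₀1, hsp⟩ := h2 Z mZ cZ σ hσ a b hprox
      set ε : ℝ := min (min γ₀ (1 - γ₀) / 2) (1 / (2 * α)) with hε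
      have hγ₀min : 0 < min γ₀ (1 - γ₀) := lt_min hγ₀0 (by linarith)
      have hε0 : 0 < ε := lt_min (by linarith) (by positivity)
      have hεlt : ε < min γ₀ (1 - γ₀) :=
        lt_of_le_of_lt (min_le_left _ _) (by linarith)
      have hret := hsp W hW ε hε0 hεlt
      refine hF.2.2 _ _ hret ?_
      intro n hn
      obtain ⟨N, hNcast, hax, hay, hnear⟩ := SpectraAux.suspRet_extract hα hγ₀0 hn
      have hNP : N ∈ P := hext N hax
      obtain ⟨hNS, k, hk⟩ := hNP
      have hgN := SpectraAux.gFun_eq_toNat (mul_nonneg (Nat.cast_nonneg N) hα.le)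
        hδ0 hδγ hδγ' hk
      have hαε2 : α * ε ≤ 1/2 := by
        have hle : ε ≤ 1 / (2 * α) := min_le_right _ _
        have := mul_le_mul_of_nonneg_left hle hα.le
        calc α * ε ≤ α * (1 / (2 * α)) := this
          _ = 1/2 := by field_simp
      have hnk : |(n : ℝ) - (k : ℝ)| < 1 := by
        calc |(n : ℝ) - (k : ℝ)|
            = |((n : ℝ) - (N : ℝ) * α) + ((N : ℝ) * α - (k : ℝ))| := by ring_nf
          _ ≤ |(n : ℝ) - (N : ℝ) * α| + |(N : ℝ) * α - (k : ℝ)| := abs_add_le _ _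
          _ < α * ε + δ := by linarith [hnear, hk]
          _ < 1 := by linarith
      have hnk' : (n : ℤ) = k := by
        have hab := abs_lt.mp hnk
        have h1'' : (n : ℤ) - k < 1 := by
          have hr : (((n : ℤ) - k : ℤ) : ℝ) < 1 := by push_cast; linarith
          exact_mod_cast hr
        have h2'' : (-1 : ℤ) < (n : ℤ) - k := by
          have hr : (-1 : ℝ) < (((n : ℤ) - k : ℤ) : ℝ) := by push_cast; linarith
          exact_mod_cast hr
        omega
      have hfinal : n = g N := by
        have h3' := hgN.2
        simp only [hg] at *
        omega
      rw [hfinal]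
      exact hNS
    have hS₀ : g '' (retTimes2 T x y U) ∈ q := by
      rw [hq, Ultrafilter.mem_map]
      exact Filter.mem_of_superset (hpret U hU) (Set.subset_preimage_image g _)
    have hess := SpectraAux.essential_of_mem_idem hqq hq0 hqF hS₀
    exact SpectraAux.essential_mono hess (Set.image_mono hsub)
end

section
/- If A ⊆ ℕ is an IP-set, then for every α > 0 and every 0 < γ < 1 the set g_{α,γ}(A) = {⌊nα + γ⌋ : n ∈ A} is an IP-set. -/
open Set Filter Topology

attribute [local instance] Ultrafilter.add

/-- Pigeonhole block lemma: among block sums of `p` with indices `≥ N` and at least `L`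
terms, some sum times `α` is within `ε` of a natural number. -/
private lemma exists_block (α ε : ℝ) (hα : 0 < α) (hε : 0 < ε) (p : ℕ → ℕ)
    (hp : ∀ n, 0 < p n) (N L : ℕ) (hL : 0 < L) :
    ∃ F : Finset ℕ, F.Nonempty ∧ (∀ n ∈ F, N ≤ n) ∧ L ≤ F.card ∧
      ∃ k : ℕ, |((∑ n ∈ F, p n : ℕ) : ℝ) * α - k| < ε := by
  classical
  set C : ℕ := ⌈1/ε⌉₊ with hCdef
  have hC0 : 0 < C := Nat.ceil_pos.mpr (by positivity)
  let S : ℕ → ℕ := fun t => ∑ n ∈ Finset.Ico N (N + L * t), p n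
  let fr : ℕ → ℝ := fun t => (S t : ℝ) * α - ⌊(S t : ℝ) * α⌋
  have hfr0 : ∀ t, 0 ≤ fr t := fun t => sub_nonneg.mpr (Int.floor_le _)
  have hfr1 : ∀ t, fr t < 1 := fun t => by
    have := Int.lt_floor_add_one ((S t : ℝ) * α)
    simp only [fr]; linarith
  let f : ℕ → ℕ := fun t => (⌊fr t / ε⌋).toNat
  have hfloor_eq : ∀ t, ((f t : ℤ)) = ⌊fr t / ε⌋ := fun t =>
    Int.toNat_of_nonneg (Int.floor_nonneg.mpr (div_nonneg (hfr0 t) hε.le))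
  have hflt : ∀ t, f t < C := by
    intro t
    have h3 : (1:ℝ)/ε ≤ C := Nat.le_ceil _
    have h1 : fr t / ε < C := by
      have h4 : fr t / ε < 1 / ε := by gcongr; exact hfr1 t
      linarith
    have h5 : (⌊fr t / ε⌋ : ℤ) < (C:ℤ) := Int.floor_lt.mpr (by exact_mod_cast h1)
    have h6 := hfloor_eq t
    omega
  have main : ∀ u v : ℕ, u < v → f u = f v →
      ∃ F : Finset ℕ, F.Nonempty ∧ (∀ n ∈ F, N ≤ n) ∧ L ≤ F.card ∧
        ∃ k : ℕ, |((∑ n ∈ F, p n : ℕ) : ℝ) * α - k| < ε := by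
    intro u v huv hfe
    have hmul : L * u < L * v := by
      calc L * u < L * u + L := by omega
      _ = L * (u + 1) := by ring
      _ ≤ L * v := Nat.mul_le_mul_left L (by omega)
    refine ⟨Finset.Ico (N + L*u) (N + L*v), Finset.nonempty_Ico.mpr (by omega), ?_, ?_, ?_⟩
    · intro n hn
      have := (Finset.mem_Ico.mp hn).1
      omega
    · rw [Nat.card_Ico]
      have h1 : L * (u+1) ≤ L * v := Nat.mul_le_mul_left L (by omega)
      have h2 : L * (u+1) = L * u + L := by ring
      omega
    · have hsum : S u + ∑ n ∈ Finset.Ico (N + L*u) (N + L*v), p n = S v :=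
        Finset.sum_Ico_consecutive p (Nat.le_add_right N (L*u)) (by omega)
      have hSle : S u ≤ S v := by omega
      have hle : (S u : ℝ) * α ≤ (S v : ℝ) * α := by
        have : (S u : ℝ) ≤ (S v : ℝ) := by exact_mod_cast hSle
        exact mul_le_mul_of_nonneg_right this hα.le
      set a : ℤ := ⌊(S v:ℝ)*α⌋ - ⌊(S u:ℝ)*α⌋ with hadef
      have ha0 : 0 ≤ a := sub_nonneg.mpr (Int.floor_le_floor hle)
      refine ⟨a.toNat, ?_⟩
      have h0 : (S u:ℝ) + ((∑ n ∈ Finset.Ico (N+L*u) (N+L*v), p n : ℕ):ℝ) = (S v:ℝ) := by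
        exact_mod_cast hsum
      have hcast : ((∑ n ∈ Finset.Ico (N+L*u) (N+L*v), p n : ℕ):ℝ) * α
          = (S v:ℝ)*α - (S u:ℝ)*α := by nlinarith [h0]
      have hk : (a.toNat : ℝ) = ((⌊(S v:ℝ)*α⌋ : ℤ):ℝ) - ((⌊(S u:ℝ)*α⌋ : ℤ):ℝ) := by
        have h1 : ((a.toNat : ℤ):ℝ) = (a:ℝ) := by rw [Int.toNat_of_nonneg ha0]
        push_cast at h1 ⊢
        rw [h1, hadef]; push_cast; ring
      have hcc : ⌊fr u / ε⌋ = ⌊fr v / ε⌋ := by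
        rw [← hfloor_eq u, ← hfloor_eq v, hfe]
      have hccR : ((⌊fr u / ε⌋:ℤ):ℝ) = ((⌊fr v / ε⌋:ℤ):ℝ) := by exact_mod_cast hcc
      have hu1 : fr u / ε < (⌊fr u / ε⌋:ℝ) + 1 := Int.lt_floor_add_one _
      have hu2 : ((⌊fr u / ε⌋:ℤ):ℝ) ≤ fr u / ε := Int.floor_le _
      have hv1 : fr v / ε < (⌊fr v / ε⌋:ℝ) + 1 := Int.lt_floor_add_one _
      have hv2 : ((⌊fr v / ε⌋:ℤ):ℝ) ≤ fr v / ε := Int.floor_le _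
      have hd1 : (fr v - fr u)/ε < 1 := by rw [sub_div]; linarith
      have hd2 : (fr u - fr v)/ε < 1 := by rw [sub_div]; linarith
      have hd1' : fr v - fr u < ε := (div_lt_one hε).mp hd1
      have hd2' : fr u - fr v < ε := (div_lt_one hε).mp hd2
      have hexpr : ((∑ n ∈ Finset.Ico (N+L*u) (N+L*v), p n : ℕ):ℝ) * α - (a.toNat:ℝ)
          = fr v - fr u := by
        rw [hcast, hk]; simp only [fr]; ring
      rw [hexpr, abs_lt]
      constructor <;> linarith
  obtain ⟨u, hu, v, hv, huv, hfeq⟩ :=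
    Finset.exists_ne_map_eq_of_card_lt_of_maps_to
      (show (Finset.range C).card < (Finset.range (C+1)).card by simp)
      (fun t _ => Finset.mem_range.mpr (hflt t))
  rcases lt_or_gt_of_ne huv with h | h
  · exact main u v h hfeq
  · exact main v u h hfeq.symm

/-- The starting index for the `i`-th block in the recursive construction. -/
private noncomputable def recN (Fc : ℕ → ℕ → Finset ℕ) : ℕ → ℕ
  | 0 => 0
  | (j+1) => ((Fc j (recN Fc j)).sup id) + 1
/-- If `A ⊆ ℕ` is an IP-set, then so is `g_{α,γ}(A)` for all `α > 0` and `0 < γ < 1`. -/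
theorem ipSet_spectra (A : Set ℕ) (hA : IsIPSet A) (α γ : ℝ) (hα : 0 < α)
    (hγ0 : 0 < γ) (hγ1 : γ < 1) : IsIPSet (gImage α γ A) := by
  classical
  obtain ⟨p, hp, hpA⟩ := hA
  have hγm : 0 < min γ (1 - γ) := lt_min hγ0 (by linarith)
  set δ : ℝ := min γ (1 - γ) / 2 with hδdef
  have hδ0 : 0 < δ := by positivity
  have hδγ : δ < γ := by
    have h := min_le_left γ (1-γ); rw [hδdef]; linarith
  have hδγ' : δ < 1 - γ := by
    have h := min_le_right γ (1-γ); rw [hδdef]; linarith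
  have hδ1 : δ < 1 := by linarith
  set L : ℕ := ⌈2/α⌉₊ with hLdef
  have hL0 : 0 < L := Nat.ceil_pos.mpr (by positivity)
  have hLα : 2 ≤ (L:ℝ) * α := by
    have h1 : 2/α ≤ (L:ℝ) := Nat.le_ceil _
    calc (2:ℝ) = 2/α * α := by field_simp
    _ ≤ (L:ℝ) * α := mul_le_mul_of_nonneg_right h1 hα.le
  have hεpos : ∀ i : ℕ, (0:ℝ) < δ / 2^(i+1) := fun i => by positivity
  choose Fc hne hge hcard kc hkc using
    fun (i N : ℕ) => exists_block α (δ/2^(i+1)) hα (hεpos i) p hp N L hL0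
  -- separation of the recursively chosen blocks
  have hsep : ∀ i j, i + 1 ≤ j → ∀ a ∈ Fc i (recN Fc i), ∀ b ∈ Fc j (recN Fc j), a < b := by
    intro i j hij
    induction j, hij using Nat.le_induction with
    | base =>
      intro a ha b hb
      have h1 : a ≤ (Fc i (recN Fc i)).sup id := Finset.le_sup (f := id) ha
      have h2 : recN Fc (i+1) ≤ b := hge (i+1) _ b hb
      have h3 : recN Fc (i+1) = (Fc i (recN Fc i)).sup id + 1 := rfl
      omega
    | succ j hij IH =>
      intro a ha b hb
      obtain ⟨x, hx⟩ := hne j (recN Fc j)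
      have h1 : a < x := IH a ha x hx
      have h2 : x ≤ (Fc j (recN Fc j)).sup id := Finset.le_sup (f := id) hx
      have h3 : recN Fc (j+1) = (Fc j (recN Fc j)).sup id + 1 := rfl
      have h4 : recN Fc (j+1) ≤ b := hge (j+1) _ b hb
      omega
  -- positivity of the chosen near-integers
  have hK0 : ∀ i, 0 < kc i (recN Fc i) := by
    intro i
    have hb := abs_lt.mp (hkc i (recN Fc i))
    have hcard' := hcard i (recN Fc i)
    have hsum1 : (Fc i (recN Fc i)).card ≤ ∑ n ∈ Fc i (recN Fc i), p n := by
      rw [Finset.card_eq_sum_ones]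
      exact Finset.sum_le_sum (fun n _ => hp n)
    have hmL : (L:ℝ) ≤ ((∑ n ∈ Fc i (recN Fc i), p n : ℕ):ℝ) := by
      exact_mod_cast le_trans hcard' hsum1
    have hm2 : (2:ℝ) ≤ ((∑ n ∈ Fc i (recN Fc i), p n : ℕ):ℝ) * α :=
      le_trans hLα (mul_le_mul_of_nonneg_right hmL hα.le)
    have h2p : (1:ℝ) ≤ 2^(i+1) := one_le_pow₀ (by norm_num)
    have hδsmall : δ/2^(i+1) ≤ δ := div_le_self hδ0.le h2p
    have h1 : (1:ℝ) < (kc i (recN Fc i) : ℝ) := by linarith [hb.2]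
    have : 1 < kc i (recN Fc i) := by exact_mod_cast h1
    omega
  refine ⟨fun i => kc i (recN Fc i), hK0, ?_⟩
  intro s hs
  have hdisj : (↑s : Set ℕ).PairwiseDisjoint (fun i => Fc i (recN Fc i)) := by
    intro i _ j _ hij
    rcases Nat.lt_or_ge i j with h | h
    · exact Finset.disjoint_left.mpr
        (fun a ha hb => absurd (hsep i j h a ha a hb) (lt_irrefl a))
    · have h' : j + 1 ≤ i := Nat.lt_of_le_of_ne h (Ne.symm hij)
      exact Finset.disjoint_right.mpr
        (fun a ha hb => absurd (hsep j i h' a ha a hb) (lt_irrefl a))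
  set W : Finset ℕ := s.biUnion (fun i => Fc i (recN Fc i)) with hWdef
  have hWsum : ∑ n ∈ W, p n = ∑ i ∈ s, ∑ n ∈ Fc i (recN Fc i), p n :=
    Finset.sum_biUnion hdisj
  have hWne : W.Nonempty := by
    obtain ⟨i, hi⟩ := hs
    obtain ⟨n, hn⟩ := hne i (recN Fc i)
    exact ⟨n, Finset.mem_biUnion.mpr ⟨i, hi, hn⟩⟩
  have hMA : ∑ n ∈ W, p n ∈ A := hpA W hWne
  refine ⟨∑ n ∈ W, p n, hMA, ?_⟩
  -- now show `gFun α γ M = ∑ i ∈ s, kc i (recN Fc i)`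
  have hMcast : ((∑ n ∈ W, p n : ℕ):ℝ) * α
      = ∑ i ∈ s, ((∑ n ∈ Fc i (recN Fc i), p n : ℕ):ℝ) * α := by
    rw [hWsum]; push_cast; rw [Finset.sum_mul]
  have hD : |((∑ n ∈ W, p n : ℕ):ℝ)*α - ∑ i ∈ s, (kc i (recN Fc i) : ℝ)| < δ := by
    have h1 : ((∑ n ∈ W, p n : ℕ):ℝ)*α - ∑ i ∈ s, (kc i (recN Fc i) : ℝ)
        = ∑ i ∈ s, (((∑ n ∈ Fc i (recN Fc i), p n : ℕ):ℝ) * α - (kc i (recN Fc i) : ℝ)) := by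
      rw [hMcast, Finset.sum_sub_distrib]
    rw [h1]
    have hsub : s ⊆ Finset.range (s.max' hs + 1) :=
      fun i hi => Finset.mem_range.mpr (Nat.lt_succ_of_le (Finset.le_max' s i hi))
    calc |∑ i ∈ s, (((∑ n ∈ Fc i (recN Fc i), p n : ℕ):ℝ) * α - (kc i (recN Fc i) : ℝ))|
        ≤ ∑ i ∈ s, |((∑ n ∈ Fc i (recN Fc i), p n : ℕ):ℝ) * α - (kc i (recN Fc i) : ℝ)| :=
          Finset.abs_sum_le_sum_abs _ _
      _ < ∑ i ∈ s, δ/2^(i+1) :=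
          Finset.sum_lt_sum_of_nonempty hs (fun i _ => hkc i (recN Fc i))
      _ ≤ ∑ i ∈ Finset.range (s.max' hs + 1), δ/2^(i+1) :=
          Finset.sum_le_sum_of_subset_of_nonneg hsub (fun i _ _ => (hεpos i).le)
      _ = (δ/2) * ∑ i ∈ Finset.range (s.max' hs + 1), (1/2:ℝ)^i := by
          rw [Finset.mul_sum]
          refine Finset.sum_congr rfl (fun i _ => ?_)
          rw [div_pow, one_pow, pow_succ, div_mul_div_comm]
          ring
      _ ≤ (δ/2) * 2 :=
          mul_le_mul_of_nonneg_left (sum_geometric_two_le _) (by positivity)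
      _ = δ := by ring
  have habs := abs_lt.mp hD
  have hfloor : ⌊((∑ n ∈ W, p n : ℕ):ℝ)*α + γ⌋ = ((∑ i ∈ s, kc i (recN Fc i) : ℕ) : ℤ) := by
    have ha1 := habs.1
    have ha2 := habs.2
    rw [Int.floor_eq_iff]
    push_cast at ha1 ha2 ⊢
    exact ⟨by linarith, by linarith⟩
  show (⌊((∑ n ∈ W, p n : ℕ):ℝ)*α + γ⌋).toNat = ∑ i ∈ s, kc i (recN Fc i)
  rw [hfloor]
  exact Int.toNat_natCast _
end

section
/- If A ⊆ ℕ is a C-set, then for every α > 0 and every 0 < γ < 1 the set g_{α,γ}(A) = {⌊nα + γ⌋ : n ∈ A} is a C-set. -/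
open Set Filter Topology

attribute [local instance] Ultrafilter.add

section CSetSpectraAux

lemma gFun_cast {α γ : ℝ} (hα : 0 < α) (hγ0 : 0 < γ) (n : ℕ) :
    ((gFun α γ n : ℤ)) = ⌊(n : ℝ) * α + γ⌋ := by
  have h0 : (0:ℝ) ≤ (n : ℝ) * α + γ := by positivity
  simp [gFun, Int.toNat_of_nonneg (Int.floor_nonneg.2 h0)]

/-- cell map into `Fin N` by `⌊N · fract x⌋`. -/
noncomputable def cellOf (N : ℕ) (hN : 0 < N) (x : ℝ) : Fin N :=
  ⟨(⌊(N:ℝ) * Int.fract x⌋).toNat, by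
    have h1 : ⌊(N:ℝ) * Int.fract x⌋ < (N : ℤ) := by
      apply Int.floor_lt.2
      have := Int.fract_lt_one x
      have hN' : (0:ℝ) < N := by exact_mod_cast hN
      push_cast
      nlinarith
    omega⟩

lemma cellOf_floor_eq {N : ℕ} (hN : 0 < N) {x y : ℝ}
    (h : cellOf N hN x = cellOf N hN y) :
    ⌊(N:ℝ) * Int.fract x⌋ = ⌊(N:ℝ) * Int.fract y⌋ := by
  have h0x : 0 ≤ ⌊(N:ℝ) * Int.fract x⌋ := Int.floor_nonneg.2 (mul_nonneg (Nat.cast_nonneg _) (Int.fract_nonneg _))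
  have h0y : 0 ≤ ⌊(N:ℝ) * Int.fract y⌋ := Int.floor_nonneg.2 (mul_nonneg (Nat.cast_nonneg _) (Int.fract_nonneg _))
  have := congrArg Fin.val h
  simp only [cellOf] at this
  omega

lemma sub_near_int {N : ℕ} (hN : 0 < N) {x y : ℝ}
    (h : cellOf N hN x = cellOf N hN y) :
    |x - y - ((⌊x⌋ - ⌊y⌋ : ℤ) : ℝ)| < 1 / N := by
  have hf := cellOf_floor_eq hN h
  have hN' : (0:ℝ) < N := by exact_mod_cast hN
  have h1 := Int.floor_le ((N:ℝ) * Int.fract x)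
  have h2 := Int.lt_floor_add_one ((N:ℝ) * Int.fract x)
  have h3 := Int.floor_le ((N:ℝ) * Int.fract y)
  have h4 := Int.lt_floor_add_one ((N:ℝ) * Int.fract y)
  rw [hf] at h1 h2
  have hkey : x - y - ((⌊x⌋ - ⌊y⌋ : ℤ) : ℝ) = Int.fract x - Int.fract y := by
    unfold Int.fract; push_cast; ring
  rw [hkey, abs_sub_lt_iff]
  constructor <;> rw [lt_div_iff₀ hN'] <;> nlinarith

lemma mem_add_ultra {p q : Ultrafilter ℕ} {s : Set ℕ} :
    s ∈ p + q ↔ {m : ℕ | {n : ℕ | m + n ∈ s} ∈ q} ∈ p := by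
  have := Ultrafilter.eventually_add p q (· ∈ s)
  exact this

lemma exists_cell_mem {N : ℕ} (hN : 0 < N) (p : Ultrafilter ℕ) (f : ℕ → Fin N) :
    ∃ j : Fin N, {n : ℕ | f n = j} ∈ p := by
  by_contra hcon
  push_neg at hcon
  have h1 : ∀ j : Fin N, {n : ℕ | f n = j}ᶜ ∈ p := fun j =>
    Ultrafilter.compl_mem_iff_notMem.2 (hcon j)
  have h2 : (⋂ j : Fin N, {n : ℕ | f n = j}ᶜ) ∈ p := Filter.iInter_mem.2 h1
  obtain ⟨n, hn⟩ := Ultrafilter.nonempty_of_mem h2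
  have := Set.mem_iInter.1 hn (f n)
  exact this rfl

lemma exists_int_close_mem {p : Ultrafilter ℕ} (hp : p + p = p) (α : ℝ) {δ : ℝ} (hδ : 0 < δ) :
    {n : ℕ | ∃ K : ℤ, |(n:ℝ) * α - K| < δ} ∈ p := by
  set N : ℕ := max 1 ⌈1/δ⌉₊ with hNdef
  have hN : 0 < N := lt_of_lt_of_le one_pos (le_max_left _ _)
  have hN' : (0:ℝ) < N := by exact_mod_cast hN
  have hNle : (1:ℝ)/N ≤ δ := by
    have h1 : 1/δ ≤ (N:ℝ) := le_trans (Nat.le_ceil _) (by exact_mod_cast le_max_right 1 ⌈1/δ⌉₊)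
    rw [div_le_iff₀ hN']
    rw [div_le_iff₀ hδ] at h1
    nlinarith
  set c : ℕ → Fin N := fun n => cellOf N hN ((n:ℝ) * α) with hc
  obtain ⟨j, hj⟩ := exists_cell_mem hN p c
  have hj2 : {m : ℕ | {n : ℕ | m + n ∈ {k : ℕ | c k = j}} ∈ p} ∈ p := by
    refine mem_add_ultra.1 ?_
    rw [hp]; exact hj
  obtain ⟨m, hm1, hm2⟩ := Ultrafilter.nonempty_of_mem (inter_mem hj hj2)
  refine p.toFilter.mem_of_superset (inter_mem hj hm2) ?_
  rintro n ⟨hn1, hn2⟩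
  have hcells : cellOf N hN (((m+n : ℕ):ℝ) * α) = cellOf N hN ((m:ℝ) * α) := by
    have e1 : c (m+n) = j := hn2
    have e2 : c m = j := hm1
    simpa [hc] using e1.trans e2.symm
  have hclose := sub_near_int hN hcells
  refine ⟨⌊((m+n : ℕ):ℝ) * α⌋ - ⌊(m:ℝ) * α⌋, ?_⟩
  have heq : ((m+n : ℕ):ℝ) * α - (m:ℝ) * α = (n:ℝ) * α := by push_cast; ring
  rw [heq] at hclose
  exact lt_of_lt_of_le hclose hNle

lemma Dset_mem {p : Ultrafilter ℕ} (hp : p + p = p) {α γ ε : ℝ} (hα : 0 < α) (hγ0 : 0 < γ)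
    (hε : 0 < ε) (hε1 : ε < γ) (hε2 : ε < 1 - γ) :
    {n : ℕ | |(n:ℝ) * α - (gFun α γ n : ℝ)| < ε} ∈ p := by
  refine p.toFilter.mem_of_superset (exists_int_close_mem hp α hε) ?_
  rintro n ⟨K, hK⟩
  have habs := abs_sub_lt_iff.1 hK
  have hfl : (gFun α γ n : ℤ) = K := by
    rw [gFun_cast hα hγ0, Int.floor_eq_iff]
    obtain ⟨h1, h2⟩ := habs
    constructor <;> push_cast <;> linarith
  have : (gFun α γ n : ℝ) = (K : ℝ) := by exact_mod_cast congrArg (fun z : ℤ => (z:ℝ)) hfl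
  simpa [this] using hK

lemma gFun_add {α γ ε : ℝ} (hα : 0 < α) (hγ0 : 0 < γ) (hε1 : 2*ε ≤ γ) (hε2 : 2*ε ≤ 1 - γ)
    {m n : ℕ}
    (hm : |(m:ℝ) * α - (gFun α γ m : ℝ)| < ε) (hn : |(n:ℝ) * α - (gFun α γ n : ℝ)| < ε) :
    gFun α γ (m + n) = gFun α γ m + gFun α γ n := by
  have hm' := abs_sub_lt_iff.1 hm
  have hn' := abs_sub_lt_iff.1 hn
  have key : (gFun α γ (m+n) : ℤ) = (gFun α γ m : ℤ) + (gFun α γ n : ℤ) := by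
    rw [gFun_cast hα hγ0, Int.floor_eq_iff]
    constructor <;> push_cast <;> nlinarith [hm'.1, hm'.2, hn'.1, hn'.2]
  exact_mod_cast key

lemma isJSet_mono {B C : Set ℕ} (h : B ⊆ C) (hB : IsJSet B) : IsJSet C := by
  intro m q hq
  obtain ⟨r, hr, s, hs, hmem⟩ := hB m q hq
  exact ⟨r, hr, s, hs, fun i => h (hmem i)⟩

lemma jset_image {α γ : ℝ} (hα : 0 < α) (hγ0 : 0 < γ) {ε : ℝ} (hε0 : 0 < ε) (hε : ε ≤ 1/4)
    (B : Set ℕ) (hB : IsJSet B)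
    (hBD : ∀ b ∈ B, |(b:ℝ) * α - (gFun α γ b : ℝ)| < ε) :
    IsJSet (gFun α γ '' B) := by
  intro m q hq
  rcases Nat.eq_zero_or_pos m with hm | hm
  · subst hm
    exact ⟨1, one_pos, {0}, Finset.singleton_nonempty 0, fun i => i.elim0⟩
  set i₀ : Fin m := ⟨0, hm⟩ with hi₀
  set S : Fin m → ℕ → ℤ := fun i t => ∑ k ∈ Finset.range t, (q i k : ℤ) with hS
  set dS : Fin m → ℕ → ℝ := fun i t => ((S i t - S i₀ t : ℤ) : ℝ) / α with hdS
  set η : ℕ → ℝ := fun n => (1/2 : ℝ)^n / (8*α) with hη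
  have hηpos : ∀ n, 0 < η n := fun n => by
    have : (0:ℝ) < (1/2:ℝ)^n := by positivity
    have : (0:ℝ) < 8*α := by linarith
    simp only [hη]; positivity
  -- key block existence
  have key : ∀ (n a : ℕ), ∃ t u : ℕ, a < t ∧ t < u ∧
      ∀ i, |dS i u - dS i t - ((⌊dS i u⌋ - ⌊dS i t⌋ : ℤ) : ℝ)| < η n := by
    intro n a
    set N : ℕ := max 1 ⌈1/(η n)⌉₊ with hNdef
    have hN : 0 < N := lt_of_lt_of_le one_pos (le_max_left _ _)
    have hN' : (0:ℝ) < N := by exact_mod_cast hN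
    have hNle : (1:ℝ)/N ≤ η n := by
      have h1 : 1/(η n) ≤ (N:ℝ) :=
        le_trans (Nat.le_ceil _) (by exact_mod_cast le_max_right 1 ⌈1/(η n)⌉₊)
      rw [div_le_iff₀ hN']
      rw [div_le_iff₀ (hηpos n)] at h1
      nlinarith
    have hinf : Infinite ↥(Set.Ioi a) := (Set.Ioi_infinite a).to_subtype
    obtain ⟨x, y, hxy, hcell⟩ := Finite.exists_ne_map_eq_of_infinite
      (fun t : ↥(Set.Ioi a) => fun i : Fin m => cellOf N hN (dS i t.1))
    have hxyne : x.1 ≠ y.1 := fun h => hxy (Subtype.ext h)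
    obtain ⟨t, u, hat, htu, hc⟩ : ∃ t u : ℕ, a < t ∧ t < u ∧
        ∀ i, cellOf N hN (dS i u) = cellOf N hN (dS i t) := by
      rcases lt_or_gt_of_ne hxyne with h | h
      · exact ⟨x.1, y.1, x.2, h, fun i => (congrFun hcell i).symm⟩
      · exact ⟨y.1, x.1, y.2, h, fun i => congrFun hcell i⟩
    exact ⟨t, u, hat, htu, fun i => lt_of_lt_of_le (sub_near_int hN (hc i)) hNle⟩
  choose f g hfg1 hfg2 hfg3 using key
  set T : ℕ → ℕ × ℕ :=
    fun n => Nat.rec (f 0 0, g 0 0) (fun k prev => (f (k+1) prev.2, g (k+1) prev.2)) n with hT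
  have hTs : ∀ k, T (k+1) = (f (k+1) (T k).2, g (k+1) (T k).2) := fun k => rfl
  have hTlt : ∀ n, (T n).1 < (T n).2 := by
    intro n
    cases n with
    | zero => exact hfg2 0 0
    | succ k => rw [hTs]; exact hfg2 (k+1) (T k).2
  have hTprop : ∀ n i,
      |dS i (T n).2 - dS i (T n).1 - ((⌊dS i (T n).2⌋ - ⌊dS i (T n).1⌋ : ℤ) : ℝ)| < η n := by
    intro n
    cases n with
    | zero => exact hfg3 0 0
    | succ k => rw [hTs]; exact hfg3 (k+1) (T k).2
  have hTgap : ∀ n, (T n).2 < (T (n+1)).1 := fun n => by rw [hTs]; exact hfg1 (n+1) (T n).2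
  have hTmono : ∀ a b, a < b → (T a).2 ≤ (T b).1 := by
    intro a b hab
    induction b, hab using Nat.le_induction with
    | base => exact le_of_lt (hTgap a)
    | succ k hk ih => exact le_trans ih (le_of_lt (lt_of_le_of_lt (le_of_lt (hTlt k)) (hTgap k)))
  set blk : ℕ → Finset ℕ := fun n => Finset.Ico (T n).1 (T n).2 with hblk
  have hblkdisjoint : ∀ a b : ℕ, a ≠ b → Disjoint (blk a) (blk b) := by
    have haux : ∀ a b : ℕ, a < b → Disjoint (blk a) (blk b) := by
      intro a b hab
      rw [Finset.disjoint_left]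
      intro x hxa hxb
      rw [hblk, Finset.mem_Ico] at hxa hxb
      have := hTmono a b hab
      omega
    intro a b hab
    rcases lt_or_gt_of_ne hab with h | h
    · exact haux a b h
    · exact (haux b a h).symm
  have hblkdisj : ∀ (F : Finset ℕ), (↑F : Set ℕ).PairwiseDisjoint blk := by
    intro F a _ b _ hab
    exact hblkdisjoint a b hab
  -- block integers
  set K : Fin m → ℕ → ℤ := fun i n => ⌊dS i (T n).2⌋ - ⌊dS i (T n).1⌋ with hK
  have hsum_blk : ∀ (i : Fin m) (n : ℕ), ∑ k ∈ blk n, ((q i k : ℤ) - (q i₀ k : ℤ)) =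
      (S i (T n).2 - S i₀ (T n).2) - (S i (T n).1 - S i₀ (T n).1) := by
    intro i n
    rw [hblk]
    rw [Finset.sum_sub_distrib]
    rw [Finset.sum_Ico_eq_sub _ (le_of_lt (hTlt n)), Finset.sum_Ico_eq_sub _ (le_of_lt (hTlt n))]
    simp only [hS]
    ring
  have hK0 : ∀ n, K i₀ n = 0 := by
    intro n
    have hz : ∀ t, dS i₀ t = 0 := by
      intro t; simp [hdS]
    simp [hK, hz]
  have hKapprox : ∀ (i : Fin m) (n : ℕ),
      |((∑ k ∈ blk n, ((q i k : ℤ) - (q i₀ k : ℤ)) : ℤ) : ℝ) - α * K i n| < α * η n := by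
    intro i n
    have h3 := hTprop n i
    have hds : dS i (T n).2 - dS i (T n).1 =
        ((∑ k ∈ blk n, ((q i k : ℤ) - (q i₀ k : ℤ)) : ℤ) : ℝ) / α := by
      rw [hsum_blk]
      simp only [hdS]
      push_cast
      field_simp
    rw [hds] at h3
    have hrw : ((∑ k ∈ blk n, ((q i k : ℤ) - (q i₀ k : ℤ)) : ℤ) : ℝ) - α * K i n =
        α * (((∑ k ∈ blk n, ((q i k : ℤ) - (q i₀ k : ℤ)) : ℤ) : ℝ) / α - ((K i n : ℤ) : ℝ)) := by
      field_simp
    rw [hrw, abs_mul, abs_of_pos hα]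
    exact (mul_lt_mul_of_pos_left h3 hα)
  -- the pulled-back sequences
  set QS : ℕ → ℕ := fun n => ∑ k ∈ blk n, q i₀ k with hQS
  set Kb : ℕ → ℕ :=
    fun n => 1 + (Finset.univ.sup fun i : Fin m => (K i n).natAbs) + ⌈((QS n : ℝ) + 1)/α⌉₊
    with hKb
  have hKbpos : ∀ (i : Fin m) (n : ℕ), (1 : ℤ) ≤ K i n + Kb n := by
    intro i n
    have h1 : ((K i n).natAbs : ℤ) ≤ ((Finset.univ.sup fun i : Fin m => (K i n).natAbs : ℕ) : ℤ) := by
      exact_mod_cast Finset.le_sup (f := fun j : Fin m => (K j n).natAbs) (Finset.mem_univ i)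
    have h2 : -(K i n) ≤ ((K i n).natAbs : ℤ) := by
      rw [← Int.abs_eq_natAbs]; exact neg_le_abs _
    have h3 : (Kb n : ℤ) = 1 + ((Finset.univ.sup fun i : Fin m => (K i n).natAbs : ℕ) : ℤ)
        + (⌈((QS n : ℝ) + 1)/α⌉₊ : ℤ) := by
      rw [hKb]; push_cast; ring
    have h4 : (0:ℤ) ≤ (⌈((QS n : ℝ) + 1)/α⌉₊ : ℤ) := by positivity
    linarith
  have hKbQS : ∀ n : ℕ, (QS n : ℝ) + 1 ≤ α * Kb n := by
    intro n
    have h1 : ((QS n : ℝ) + 1)/α ≤ (⌈((QS n : ℝ) + 1)/α⌉₊ : ℝ) := Nat.le_ceil _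
    have h2 : (⌈((QS n : ℝ) + 1)/α⌉₊ : ℝ) ≤ (Kb n : ℝ) := by
      rw [hKb]; push_cast
      have : (0:ℝ) ≤ ((Finset.univ.sup fun i : Fin m => (K i n).natAbs : ℕ) : ℝ) := by positivity
      linarith
    rw [div_le_iff₀ hα] at h1
    nlinarith
  set pJ : Fin m → ℕ → ℕ := fun i n => (K i n + Kb n).toNat with hpJdef
  have hpJ : ∀ (i : Fin m) (n : ℕ), ((pJ i n : ℤ)) = K i n + Kb n := by
    intro i n
    rw [hpJdef]
    exact Int.toNat_of_nonneg (by linarith [hKbpos i n])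
  have hpJpos : ∀ (i : Fin m) (n : ℕ), 0 < pJ i n := by
    intro i n
    have h1 := hpJ i n
    have h2 := hKbpos i n
    omega
  have hpJ0 : ∀ n : ℕ, pJ i₀ n = Kb n := by
    intro n
    have h1 := hpJ i₀ n
    rw [hK0 n] at h1
    omega
  obtain ⟨r, hr, F, hF, hbmem⟩ := hB m pJ hpJpos
  set b : Fin m → ℕ := fun i => r + ∑ n ∈ F, pJ i n with hb
  have hθ : ∀ i, |(b i : ℝ) * α - (gFun α γ (b i) : ℝ)| < ε := fun i => hBD _ (hbmem i)
  -- sum of errors is small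
  have hηsum : ∑ n ∈ F, α * η n ≤ 1/4 := by
    have hterm : ∀ n : ℕ, α * η n = (1/2:ℝ)^n / 8 := by
      intro n; rw [hη]; field_simp
    have hsub : F ⊆ Finset.range (F.sup id + 1) := by
      intro n hn
      rw [Finset.mem_range]
      exact Nat.lt_succ_of_le (Finset.le_sup (f := id) hn)
    have hbound : ∑ n ∈ F, (1/2:ℝ)^n ≤ 2 := by
      refine le_trans (Finset.sum_le_sum_of_subset_of_nonneg hsub ?_) (sum_geometric_two_le _)
      intro i _ _
      positivity
    calc ∑ n ∈ F, α * η n = ∑ n ∈ F, (1/2:ℝ)^n / 8 := by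
          exact Finset.sum_congr rfl fun n _ => hterm n
      _ = (∑ n ∈ F, (1/2:ℝ)^n) / 8 := by rw [Finset.sum_div]
      _ ≤ 2/8 := by linarith
      _ = 1/4 := by norm_num
  -- difference of the b's
  have hbi_int : ∀ i : Fin m, (b i : ℤ) - (b i₀ : ℤ) = ∑ n ∈ F, K i n := by
    intro i
    have hterm : ∀ n ∈ F, (pJ i n : ℤ) - (pJ i₀ n : ℤ) = K i n := by
      intro n _
      have h1 := hpJ i n
      have h2 : ((pJ i₀ n : ℕ) : ℤ) = (Kb n : ℤ) := by exact_mod_cast hpJ0 n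
      rw [h1, h2]; ring
    have h2 : ∑ n ∈ F, ((pJ i n : ℤ) - (pJ i₀ n : ℤ)) = ∑ n ∈ F, K i n :=
      Finset.sum_congr rfl hterm
    rw [Finset.sum_sub_distrib] at h2
    rw [hb]
    push_cast
    linarith
  -- main claim
  have main : ∀ i : Fin m, (gFun α γ (b i) : ℤ) =
      (gFun α γ (b i₀) : ℤ) + ∑ n ∈ F, ∑ k ∈ blk n, ((q i k : ℤ) - (q i₀ k : ℤ)) := by
    intro i
    have hcast : (b i : ℝ) - (b i₀ : ℝ) = ∑ n ∈ F, ((K i n : ℤ) : ℝ) := by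
      have := congrArg (fun z : ℤ => (z : ℝ)) (hbi_int i)
      push_cast at this ⊢
      convert this using 2
    have hreal : |(((gFun α γ (b i) : ℤ) - (gFun α γ (b i₀) : ℤ)
        - ∑ n ∈ F, ∑ k ∈ blk n, ((q i k : ℤ) - (q i₀ k : ℤ)) : ℤ) : ℝ)| < 1 := by
      have e1 : (((gFun α γ (b i) : ℤ) - (gFun α γ (b i₀) : ℤ)
          - ∑ n ∈ F, ∑ k ∈ blk n, ((q i k : ℤ) - (q i₀ k : ℤ)) : ℤ) : ℝ)
          = (((gFun α γ (b i) : ℝ) - (b i : ℝ) * α) - ((gFun α γ (b i₀) : ℝ) - (b i₀ : ℝ) * α))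
            + ∑ n ∈ F, (α * ((K i n : ℤ) : ℝ)
              - ((∑ k ∈ blk n, ((q i k : ℤ) - (q i₀ k : ℤ)) : ℤ) : ℝ)) := by
        rw [Finset.sum_sub_distrib, ← Finset.mul_sum, ← hcast]
        push_cast
        ring
      rw [e1]
      have hA : |(gFun α γ (b i) : ℝ) - (b i : ℝ) * α| < ε := by
        rw [abs_sub_comm]; exact hθ i
      have hB2 : |(gFun α γ (b i₀) : ℝ) - (b i₀ : ℝ) * α| < ε := by
        rw [abs_sub_comm]; exact hθ i₀
      have hC : |∑ n ∈ F, (α * ((K i n : ℤ) : ℝ)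
          - ((∑ k ∈ blk n, ((q i k : ℤ) - (q i₀ k : ℤ)) : ℤ) : ℝ))| ≤ ∑ n ∈ F, α * η n := by
        refine le_trans (Finset.abs_sum_le_sum_abs _ _) (Finset.sum_le_sum fun n _ => ?_)
        have := hKapprox i n
        rw [abs_sub_comm] at this
        exact le_of_lt this
      have h5 := abs_add_le (((gFun α γ (b i) : ℝ) - (b i : ℝ) * α)
          - ((gFun α γ (b i₀) : ℝ) - (b i₀ : ℝ) * α))
        (∑ n ∈ F, (α * ((K i n : ℤ) : ℝ)
          - ((∑ k ∈ blk n, ((q i k : ℤ) - (q i₀ k : ℤ)) : ℤ) : ℝ)))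
      have h6 : |((gFun α γ (b i) : ℝ) - (b i : ℝ) * α)
          - ((gFun α γ (b i₀) : ℝ) - (b i₀ : ℝ) * α)|
          ≤ |(gFun α γ (b i) : ℝ) - (b i : ℝ) * α| + |(gFun α γ (b i₀) : ℝ) - (b i₀ : ℝ) * α| :=
        abs_sub _ _
      linarith
    have hZ : |((gFun α γ (b i) : ℤ) - (gFun α γ (b i₀) : ℤ)
        - ∑ n ∈ F, ∑ k ∈ blk n, ((q i k : ℤ) - (q i₀ k : ℤ)) : ℤ)| < 1 := by
      exact_mod_cast hreal
    have := Int.abs_lt_one_iff.mp hZ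
    omega
  -- the shift
  set r' : ℤ := (gFun α γ (b i₀) : ℤ) - ∑ n ∈ F, (QS n : ℤ) with hr'def
  have hr'pos : 1 ≤ r' := by
    have h1 : (b i₀ : ℝ) * α - ε < (gFun α γ (b i₀) : ℝ) := by
      have := (abs_sub_lt_iff.1 (hθ i₀)).1
      linarith
    have hb0 : (b i₀ : ℝ) = (r : ℝ) + ∑ n ∈ F, (Kb n : ℝ) := by
      rw [hb]
      push_cast
      have : ∀ n ∈ F, ((pJ i₀ n : ℕ) : ℝ) = ((Kb n : ℕ) : ℝ) := fun n _ => by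
        exact_mod_cast hpJ0 n
      rw [Finset.sum_congr rfl this]
    have h2 : ∑ n ∈ F, ((QS n : ℝ) + 1) ≤ (b i₀ : ℝ) * α := by
      calc ∑ n ∈ F, ((QS n : ℝ) + 1) ≤ ∑ n ∈ F, α * (Kb n : ℝ) :=
            Finset.sum_le_sum fun n _ => hKbQS n
        _ = α * ∑ n ∈ F, (Kb n : ℝ) := by rw [Finset.mul_sum]
        _ ≤ α * ((r : ℝ) + ∑ n ∈ F, (Kb n : ℝ)) := by
            have hr0 : (0:ℝ) ≤ (r:ℝ) := Nat.cast_nonneg r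
            nlinarith [Finset.sum_nonneg (fun n (_ : n ∈ F) => (Nat.cast_nonneg (Kb n) : (0:ℝ) ≤ (Kb n : ℝ)))]
        _ = (b i₀ : ℝ) * α := by rw [hb0]; ring
    have h3 : (∑ n ∈ F, (QS n : ℝ)) + 1 ≤ ∑ n ∈ F, ((QS n : ℝ) + 1) := by
      rw [Finset.sum_add_distrib, Finset.sum_const, nsmul_eq_mul]
      have : (1:ℝ) ≤ (F.card : ℝ) := by exact_mod_cast hF.card_pos
      linarith
    have h4 : (0:ℝ) < ((r' : ℤ) : ℝ) := by
      rw [hr'def]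
      push_cast
      linarith
    have : (0:ℤ) < r' := by exact_mod_cast h4
    omega
  refine ⟨r'.toNat, by omega, F.biUnion blk, ?_, ?_⟩
  · obtain ⟨n, hn⟩ := hF
    exact ⟨(T n).1, Finset.mem_biUnion.2 ⟨n, hn, Finset.mem_Ico.2 ⟨le_refl _, hTlt n⟩⟩⟩
  · intro i
    refine ⟨b i, hbmem i, ?_⟩
    have hQScast : ∀ n : ℕ, (QS n : ℤ) = ∑ k ∈ blk n, (q i₀ k : ℤ) := by
      intro n
      simp only [hQS]
      push_cast
      rfl
    have hcast2 : ((r'.toNat + ∑ k ∈ F.biUnion blk, q i k : ℕ) : ℤ) = (gFun α γ (b i) : ℤ) := by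
      push_cast
      rw [Int.toNat_of_nonneg (by omega : (0:ℤ) ≤ r')]
      have hsplit : ∑ k ∈ F.biUnion blk, (q i k : ℤ) = ∑ n ∈ F, ∑ k ∈ blk n, (q i k : ℤ) :=
        Finset.sum_biUnion (hblkdisj F)
      rw [hsplit, main i, hr'def]
      have hsub2 : ∑ n ∈ F, ∑ k ∈ blk n, ((q i k : ℤ) - (q i₀ k : ℤ))
          = ∑ n ∈ F, (∑ k ∈ blk n, (q i k : ℤ) - ∑ k ∈ blk n, (q i₀ k : ℤ)) :=
        Finset.sum_congr rfl fun n _ => Finset.sum_sub_distrib _ _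
      rw [hsub2, Finset.sum_sub_distrib]
      have hQSsum : ∑ n ∈ F, (QS n : ℤ) = ∑ n ∈ F, ∑ k ∈ blk n, (q i₀ k : ℤ) :=
        Finset.sum_congr rfl fun n _ => hQScast n
      rw [hQSsum]
      ring
    exact_mod_cast hcast2.symm

end CSetSpectraAux

/-- If `A ⊆ ℕ` is a C-set, then so is `g_{α,γ}(A)` for all `α > 0` and `0 < γ < 1`. -/
theorem cSet_spectra (A : Set ℕ) (hA : IsCSet A) (α γ : ℝ) (hα : 0 < α)
    (hγ0 : 0 < γ) (hγ1 : γ < 1) : IsCSet (gImage α γ A) := by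
  obtain ⟨p, hpp, hpJ, hpA⟩ := hA
  set ε : ℝ := min γ (1 - γ) / 4 with hεdef
  have hminpos : 0 < min γ (1 - γ) := lt_min hγ0 (by linarith)
  have hmin1 : min γ (1 - γ) ≤ γ := min_le_left _ _
  have hmin2 : min γ (1 - γ) ≤ 1 - γ := min_le_right _ _
  have hε0 : 0 < ε := by rw [hεdef]; positivity
  have hε1 : ε < γ := by rw [hεdef]; linarith
  have hε2 : ε < 1 - γ := by rw [hεdef]; linarith
  have hε3 : 2 * ε ≤ γ := by rw [hεdef]; linarith
  have hε4 : 2 * ε ≤ 1 - γ := by rw [hεdef]; linarith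
  have hε5 : ε ≤ 1/4 := by
    rw [hεdef]
    have : min γ (1 - γ) ≤ 1 := by linarith
    linarith
  set D : Set ℕ := {n : ℕ | |(n:ℝ) * α - (gFun α γ n : ℝ)| < ε} with hDdef
  have hD : D ∈ p := Dset_mem hpp hα hγ0 hε0 hε1 hε2
  set q : Ultrafilter ℕ := Ultrafilter.map (gFun α γ) p with hqdef
  have hmemq : ∀ C : Set ℕ, C ∈ q ↔ gFun α γ ⁻¹' C ∈ p := fun C => Ultrafilter.mem_map
  -- every member of q contains the image of a member of p inside D
  have hadd : ∀ C ∈ q, C ∈ q + q := by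
    intro C hC
    have hBp : gFun α γ ⁻¹' C ∩ D ∈ p := inter_mem ((hmemq C).1 hC) hD
    have hstar : {a : ℕ | {c : ℕ | a + c ∈ gFun α γ ⁻¹' C ∩ D} ∈ p} ∈ p := by
      refine mem_add_ultra.1 ?_
      rw [hpp]; exact hBp
    rw [mem_add_ultra]
    rw [hmemq]
    refine p.toFilter.mem_of_superset (inter_mem hstar hD) ?_
    rintro a ⟨ha1, ha2⟩
    show {n : ℕ | gFun α γ a + n ∈ C} ∈ q
    rw [hmemq]
    refine p.toFilter.mem_of_superset (inter_mem ha1 hD) ?_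
    rintro c ⟨hc1, hc2⟩
    show gFun α γ a + gFun α γ c ∈ C
    rw [← gFun_add hα hγ0 hε3 hε4 ha2 hc2]
    exact hc1.1
  have hqq : q + q = q := by
    apply Ultrafilter.coe_injective
    apply Filter.ext
    intro C
    constructor
    · intro hC
      by_contra hnC
      have h1 : Cᶜ ∈ q := Ultrafilter.compl_mem_iff_notMem.2 hnC
      have h2 : Cᶜ ∈ q + q := hadd _ h1
      have h3 : C ∈ (q + q : Ultrafilter ℕ) := hC
      exact absurd h3 (Ultrafilter.compl_mem_iff_notMem.1 h2)
    · intro hC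
      exact hadd C hC
  refine ⟨q, hqq, ?_, ?_⟩
  · intro C hC
    have hBp : gFun α γ ⁻¹' C ∩ D ∈ p := inter_mem ((hmemq C).1 hC) hD
    have hJB : IsJSet (gFun α γ ⁻¹' C ∩ D) := hpJ _ hBp
    have hIm := jset_image hα hγ0 hε0 hε5 _ hJB (fun b hb => hb.2)
    refine isJSet_mono ?_ hIm
    rintro _ ⟨x, hx, rfl⟩
    exact hx.1
  · rw [hmemq]
    exact p.toFilter.mem_of_superset hpA (Set.subset_preimage_image _ _)
end

section
/- Let F be a Furstenberg family on ℕ. If A ⊆ ℕ is an essential F-set, then there exist a compact metric space X, a continuous surjection T : X → X, points x, y ∈ X and a neighborhood U of y such that x is F-strongly proximal to y and N((x,y),U×U) ⊆ A (that is, A is an essential F-set via a system whose map is onto). -/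
open Set Filter Topology

attribute [local instance] Ultrafilter.add

private lemma shift_iterate {X : Type*} (n : ℕ) (f : ℕ → X) (k : ℕ) :
    (fun g : ℕ → X => fun m => g (m + 1))^[n] f k = f (k + n) := by
  induction n generalizing f k with
  | zero => simp
  | succ n ih =>
      rw [Function.iterate_succ_apply, ih]
      ring_nf

/-- Lemma 3.1: every essential `F`-set is an essential `F`-set via a dynamical system whose
map is onto. -/
theorem essentialSet_via_surjective (F : Set (Set ℕ)) (hF : IsFurstenbergFamily F)
    (A : Set ℕ) (hA : IsEssentialSet F A) :
    ∃ (X : Type) (_ : MetricSpace X) (_ : CompactSpace X) (T : X → X),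
      Continuous T ∧ Function.Surjective T ∧
        ∃ x y : X, StronglyProximal F T x y ∧ ∃ U ∈ nhds y, retTimes2 T x y U ⊆ A := by
  obtain ⟨X, _, _, T, hT, x, y, hp, U, hU, hUA⟩ := hA
  letI : MetricSpace (ℕ → X) := PiCountable.metricSpace
  refine ⟨ℕ → X, inferInstance, inferInstance,
    (fun g : ℕ → X => fun m => g (m + 1)), ?_, ?_,
    (fun n => T^[n] x), (fun n => T^[n] y), ?_, {f : ℕ → X | f 0 ∈ U}, ?_, ?_⟩
  · exact continuous_pi fun n => continuous_apply (n + 1)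
  · intro g
    exact ⟨fun n => Nat.casesOn n x g, funext fun n => rfl⟩
  · intro V hV
    rw [nhds_pi, Filter.mem_pi] at hV
    obtain ⟨I, hIfin, t, ht, htV⟩ := hV
    have hW : (⋂ k ∈ I, (T^[k]) ⁻¹' t k) ∈ nhds y := by
      rw [Filter.biInter_mem hIfin]
      intro k _
      exact (hT.iterate k).continuousAt.preimage_mem_nhds (ht k)
    refine hF.2.2 _ _ (hp _ hW) ?_
    rintro n ⟨hn, hxW, hyW⟩
    simp only [Set.mem_iInter, Set.mem_preimage] at hxW hyW
    refine ⟨hn, htV ?_, htV ?_⟩ <;>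
    · intro k hk
      rw [shift_iterate, Function.iterate_add_apply]
      first
      | exact hxW k hk
      | exact hyW k hk
  · exact (continuous_apply 0).continuousAt.preimage_mem_nhds (by simpa using hU)
  · rintro n ⟨hn, hxU, hyU⟩
    simp only [Set.mem_setOf_eq, shift_iterate, Nat.zero_add] at hxU hyU
    exact hUA ⟨hn, hxU, hyU⟩
end
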